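/- arXiv:1305.7089 — 4 statements merged into one kernel-verified Lean document; each statement's English description precedes it below -/
import Mathlib

section
/- Let u : ℝ² → ℝ² be smooth, 2π-periodic, and divergence-free. Then ∫_Q ((u·∇)u)·Δu dx = 0, where Q = [0,2π]² is the period cell. (This is the two-dimensional orthogonality property (B(u,u), Au)_{L²} = 0 used for the enstrophy balance.) -/
open MeasureTheory Filter Topology Real Set
open scoped RealInnerProductSpace
noncomputable section

/-- The plane, with its Euclidean structure. -/
abbrev E2 : Type := EuclideanSpace ℝ (Fin 2)

/-- Partial derivative `∂ᵢ g` at `x`. -/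
def pd (i : Fin 2) (g : E2 → ℝ) (x : E2) : ℝ := fderiv ℝ g x (EuclideanSpace.single i 1)

/-- Laplacian `Δ g` at `x`. -/
def lap (g : E2 → ℝ) (x : E2) : ℝ := ∑ i : Fin 2, pd i (pd i g) x

/-- Perpendicular gradient `∇^⊥ψ = (−∂₂ψ, ∂₁ψ)`. -/
def gradPerp (ψ : E2 → ℝ) (x : E2) : Fin 2 → ℝ := ![-(pd 1 ψ x), pd 0 ψ x]

/-- The period cell `Q = [0,2π]²`. -/
def Q2 : Set E2 := {x : E2 | x 0 ∈ Set.Icc 0 (2 * π) ∧ x 1 ∈ Set.Icc 0 (2 * π)}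

/-- A function on `ℝ²` is `2π`-periodic if it is invariant under translation by
`2π eᵢ`, `i = 1,2`. -/
def Per2 {α : Type*} (v : E2 → α) : Prop :=
  ∀ (x : E2) (i : Fin 2), v (x + (2 * π) • EuclideanSpace.single i 1) = v x

lemma htop1 : ((⊤:ℕ∞) : WithTop ℕ∞) + 1 ≤ ((⊤:ℕ∞) : WithTop ℕ∞) := by
  simp
lemma hone : ((⊤:ℕ∞) : WithTop ℕ∞) ≠ 0 := by
  simp

lemma pd_contDiff {g : E2 → ℝ} (hg : ContDiff ℝ (⊤:ℕ∞) g) (i : Fin 2) :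
    ContDiff ℝ (⊤:ℕ∞) (pd i g) := by
  have h := hg.fderiv_right htop1
  exact h.clm_apply contDiff_const

lemma pd_add {f g : E2 → ℝ} {x : E2} (hf : DifferentiableAt ℝ f x)
    (hg : DifferentiableAt ℝ g x) (i : Fin 2) :
    pd i (fun y => f y + g y) x = pd i f x + pd i g x := by
  unfold pd; rw [fderiv_fun_add hf hg]; rfl

lemma pd_sub {f g : E2 → ℝ} {x : E2} (hf : DifferentiableAt ℝ f x)
    (hg : DifferentiableAt ℝ g x) (i : Fin 2) :
    pd i (fun y => f y - g y) x = pd i f x - pd i g x := by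
  unfold pd; rw [fderiv_fun_sub hf hg]; rfl

lemma pd_mul {f g : E2 → ℝ} {x : E2} (hf : DifferentiableAt ℝ f x)
    (hg : DifferentiableAt ℝ g x) (i : Fin 2) :
    pd i (fun y => f y * g y) x = pd i f x * g x + f x * pd i g x := by
  unfold pd; rw [fderiv_fun_mul hf hg]
  simp [ContinuousLinearMap.add_apply, ContinuousLinearMap.smul_apply]
  ring

lemma pd_div_const {f : E2 → ℝ} {x : E2} (hf : DifferentiableAt ℝ f x) (c : ℝ) (i : Fin 2) :
    pd i (fun y => f y / c) x = pd i f x / c := by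
  unfold pd
  simp only [div_eq_mul_inv]
  rw [fderiv_mul_const hf]
  simp [ContinuousLinearMap.smul_apply]
  ring

lemma pd_neg {f : E2 → ℝ} {x : E2} (i : Fin 2) :
    pd i (fun y => -(f y)) x = -(pd i f x) := by
  unfold pd; rw [fderiv_fun_neg]; rfl

lemma pd_comm {g : E2 → ℝ} (hg : ContDiff ℝ (⊤:ℕ∞) g) (i j : Fin 2) (x : E2) :
    pd i (pd j g) x = pd j (pd i g) x := by
  have hd : ∀ y, HasFDerivAt g (fderiv ℝ g y) y := fun y =>
    (hg.differentiable hone y).hasFDerivAt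
  have hd2 : HasFDerivAt (fderiv ℝ g) (fderiv ℝ (fderiv ℝ g) x) x :=
    ((hg.fderiv_right htop1).differentiable hone x).hasFDerivAt
  have hsymm := second_derivative_symmetric hd hd2 (EuclideanSpace.single i 1)
    (EuclideanSpace.single j 1)
  have key : ∀ (k l : Fin 2), pd k (pd l g) x
      = fderiv ℝ (fderiv ℝ g) x (EuclideanSpace.single k 1) (EuclideanSpace.single l 1) := by
    intro k l
    have : pd l g = fun y => (fderiv ℝ g y) (EuclideanSpace.single l 1) := rfl
    rw [show pd k (pd l g) x = fderiv ℝ (fun y => (fderiv ℝ g y) (EuclideanSpace.single l 1)) x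
        (EuclideanSpace.single k 1) from rfl]
    rw [fderiv_clm_apply (((hg.fderiv_right htop1).differentiable hone x))
      (differentiableAt_const _)]
    simp
  rw [key i j, key j i, hsymm]


lemma pd_per {g : E2 → ℝ} (hg : Differentiable ℝ g) (hp : Per2 g) (i : Fin 2) :
    Per2 (pd i g) := by
  intro x j
  set c : E2 := (2 * Real.pi) • EuclideanSpace.single j 1
  have htrans : HasFDerivAt (fun y : E2 => y + c) (ContinuousLinearMap.id ℝ E2) x :=
    (hasFDerivAt_id x).add_const c
  have hcomp : HasFDerivAt (fun y => g (y + c)) ((fderiv ℝ g (x + c)).comp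
      (ContinuousLinearMap.id ℝ E2)) x :=
    (hg (x + c)).hasFDerivAt.comp x htrans
  have hgc : (fun y => g (y + c)) = g := funext fun y => hp y j
  rw [hgc] at hcomp
  have : fderiv ℝ g x = (fderiv ℝ g (x + c)).comp (ContinuousLinearMap.id ℝ E2) :=
    hcomp.fderiv
  unfold pd
  rw [this]
  rfl


open MeasureTheory in
lemma int_pd_zero (F0 F1 : E2 → ℝ) (h0 : ContDiff ℝ (⊤:ℕ∞) F0) (h1 : ContDiff ℝ (⊤:ℕ∞) F1)
    (hp0 : Per2 F0) (hp1 : Per2 F1) :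
    ∫ x in Q2, (pd 0 F0 x + pd 1 F1 x) = 0 := by
  set eL : (Fin 2 → ℝ) ≃L[ℝ] E2 := (EuclideanSpace.equiv (Fin 2) ℝ).symm with heL
  have heL1 : ∀ i : Fin 2, eL (Pi.single i 1) = EuclideanSpace.single i 1 := fun i => rfl
  set G : Fin 2 → (Fin 2 → ℝ) → ℝ := ![fun y => F0 (eL y), fun y => F1 (eL y)] with hG
  set G' : Fin 2 → (Fin 2 → ℝ) → (Fin 2 → ℝ) →L[ℝ] ℝ :=
    ![fun y => (fderiv ℝ F0 (eL y)).comp (eL : (Fin 2 → ℝ) →L[ℝ] E2),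
      fun y => (fderiv ℝ F1 (eL y)).comp (eL : (Fin 2 → ℝ) →L[ℝ] E2)] with hG'
  have hle : (0 : Fin 2 → ℝ) ≤ fun _ => 2 * Real.pi := by
    intro i; positivity
  have Hc : ∀ i, ContinuousOn (G i)
      (Set.Icc (0 : Fin 2 → ℝ) fun _ => 2 * Real.pi) := by
    intro i
    fin_cases i <;> simp only [hG, Matrix.cons_val_zero, Matrix.cons_val_one, Matrix.head_cons] <;>
      exact ((by first | exact h0.continuous | exact h1.continuous :
        Continuous _).comp eL.continuous).continuousOn
  have Hd : ∀ x ∈ (Set.pi Set.univ fun i => Set.Ioo ((0 : Fin 2 → ℝ) i)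
        ((fun _ => 2 * Real.pi) i)) \ (∅ : Set (Fin 2 → ℝ)),
      ∀ i, HasFDerivAt (G i) (G' i x) x := by
    intro x _ i
    have H0 : HasFDerivAt (fun y : Fin 2 → ℝ => F0 (eL y))
        ((fderiv ℝ F0 (eL x)).comp (eL : (Fin 2 → ℝ) →L[ℝ] E2)) x :=
      HasFDerivAt.comp x (h0.differentiable hone (eL x)).hasFDerivAt eL.hasFDerivAt
    have H1 : HasFDerivAt (fun y : Fin 2 → ℝ => F1 (eL y))
        ((fderiv ℝ F1 (eL x)).comp (eL : (Fin 2 → ℝ) →L[ℝ] E2)) x :=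
      HasFDerivAt.comp x (h1.differentiable hone (eL x)).hasFDerivAt eL.hasFDerivAt
    fin_cases i <;>
      simp only [hG, hG', Matrix.cons_val_zero, Matrix.cons_val_one, Matrix.head_cons] <;>
      first | exact H0 | exact H1
  have hcont : Continuous fun x : Fin 2 → ℝ =>
      ∑ i : Fin 2, G' i x (Pi.single i 1) := by
    simp only [Fin.sum_univ_two, hG', Matrix.cons_val_zero, Matrix.cons_val_one, Matrix.head_cons,
      ContinuousLinearMap.comp_apply]
    exact (((pd_contDiff h0 0).continuous.comp eL.continuous).add
      ((pd_contDiff h1 1).continuous.comp eL.continuous))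
  have Hi : IntegrableOn (fun x => ∑ i : Fin 2, G' i x (Pi.single i 1))
      (Set.Icc (0 : Fin 2 → ℝ) fun _ => 2 * Real.pi) volume :=
    hcont.continuousOn.integrableOn_compact isCompact_Icc
  have key := MeasureTheory.integral_divergence_of_hasFDerivAt_off_countable'
    (a := (0 : Fin 2 → ℝ)) (b := fun _ => 2 * Real.pi) hle G G' ∅ Set.countable_empty Hc Hd Hi
  -- boundary terms vanish
  have hins : ∀ (i : Fin 2) (y : Fin 1 → ℝ),
      (Fin.insertNth i (2 * Real.pi) y : Fin 2 → ℝ)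
        = (Fin.insertNth i (0 : ℝ) y : Fin 2 → ℝ)
          + (2 * Real.pi) • (Pi.single i 1 : Fin 2 → ℝ) := by
    intro i y
    funext j
    refine Fin.succAboveCases i ?_ ?_ j
    · simp
    · intro k
      simp [Fin.insertNth_apply_succAbove, Pi.single_eq_of_ne (Fin.succAbove_ne i k)]
  have hGper : ∀ (i k : Fin 2) (z : Fin 2 → ℝ),
      G i (z + (2 * Real.pi) • (Pi.single k 1 : Fin 2 → ℝ)) = G i z := by
    intro i k z
    have hz : eL (z + (2 * Real.pi) • (Pi.single k 1 : Fin 2 → ℝ))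
        = eL z + (2 * Real.pi) • EuclideanSpace.single k 1 := by
      rw [eL.map_add, eL.map_smul, heL1]
    fin_cases i
    · show F0 (eL (z + (2 * Real.pi) • (Pi.single k 1 : Fin 2 → ℝ))) = F0 (eL z)
      rw [hz]; exact hp0 (eL z) k
    · show F1 (eL (z + (2 * Real.pi) • (Pi.single k 1 : Fin 2 → ℝ))) = F1 (eL z)
      rw [hz]; exact hp1 (eL z) k
  have key2 : (∫ x in Set.Icc (0 : Fin 2 → ℝ) fun _ => 2 * Real.pi,
      ∑ i : Fin 2, G' i x (Pi.single i 1)) = 0 := by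
    rw [key]
    refine Finset.sum_eq_zero fun i _ => sub_eq_zero_of_eq ?_
    refine MeasureTheory.integral_congr_ae (Filter.Eventually.of_forall fun y => ?_)
    show G i (Fin.insertNth i (2 * Real.pi) y) = G i (Fin.insertNth i (0 : ℝ) y)
    rw [hins i y]
    exact hGper i i _
  -- transfer the integral
  have hme : MeasurePreserving (MeasurableEquiv.toLp 2 (Fin 2 → ℝ)).symm volume volume :=
    EuclideanSpace.volume_preserving_symm_measurableEquiv_toLp (Fin 2)
  have hemb : MeasurableEmbedding (MeasurableEquiv.toLp 2 (Fin 2 → ℝ)).symm :=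
    (MeasurableEquiv.toLp 2 (Fin 2 → ℝ)).symm.measurableEmbedding
  have htrans := hme.setIntegral_preimage_emb hemb
    (fun y => ∑ i : Fin 2, G' i y (Pi.single i 1))
    (Set.Icc (0 : Fin 2 → ℝ) fun _ => 2 * Real.pi)
  have hQ : (MeasurableEquiv.toLp 2 (Fin 2 → ℝ)).symm ⁻¹'
      (Set.Icc (0 : Fin 2 → ℝ) fun _ => 2 * Real.pi) = Q2 := by
    ext x
    simp only [Set.mem_preimage, Set.mem_Icc, Q2, Set.mem_setOf_eq, Pi.le_def]
    constructor
    · rintro ⟨ha, hb⟩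
      exact ⟨⟨ha 0, hb 0⟩, ⟨ha 1, hb 1⟩⟩
    · rintro ⟨⟨h00, h01⟩, ⟨h10, h11⟩⟩
      constructor <;> intro i <;> fin_cases i <;> assumption
  have hfun : ∀ x : E2, (∑ i : Fin 2, G' i ((MeasurableEquiv.toLp 2 (Fin 2 → ℝ)).symm x)
      (Pi.single i 1)) = pd 0 F0 x + pd 1 F1 x := by
    intro x
    have hx : eL ((MeasurableEquiv.toLp 2 (Fin 2 → ℝ)).symm x) = x := rfl
    simp only [Fin.sum_univ_two, hG', Matrix.cons_val_zero, Matrix.cons_val_one, Matrix.head_cons,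
      ContinuousLinearMap.comp_apply, hx]
    rfl
  rw [hQ] at htrans
  calc ∫ x in Q2, (pd 0 F0 x + pd 1 F1 x)
      = ∫ x in Q2, ∑ i : Fin 2, G' i ((MeasurableEquiv.toLp 2 (Fin 2 → ℝ)).symm x)
          (Pi.single i 1) := by
        exact MeasureTheory.integral_congr_ae (Filter.Eventually.of_forall fun x => (hfun x).symm)
    _ = ∫ y in Set.Icc (0 : Fin 2 → ℝ) fun _ => 2 * Real.pi,
          ∑ i : Fin 2, G' i y (Pi.single i 1) := htrans
    _ = 0 := key2

def w2 (u0 u1 : E2 → ℝ) : E2 → ℝ := fun y => pd 0 u1 y - pd 1 u0 y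
def aa2 (u0 u1 : E2 → ℝ) : E2 → ℝ := fun y => u0 y * pd 0 u0 y + u1 y * pd 1 u0 y
def bb2 (u0 u1 : E2 → ℝ) : E2 → ℝ := fun y => u0 y * pd 0 u1 y + u1 y * pd 1 u1 y
def FF0 (u0 u1 : E2 → ℝ) : E2 → ℝ :=
  fun y => bb2 u0 u1 y * w2 u0 u1 y - u0 y * (w2 u0 u1 y * w2 u0 u1 y) / 2
def FF1 (u0 u1 : E2 → ℝ) : E2 → ℝ :=
  fun y => -(aa2 u0 u1 y * w2 u0 u1 y) - u1 y * (w2 u0 u1 y * w2 u0 u1 y) / 2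

section smoothness
variable {u0 u1 : E2 → ℝ}

lemma w2_contDiff (h0 : ContDiff ℝ (⊤:ℕ∞) u0) (h1 : ContDiff ℝ (⊤:ℕ∞) u1) : ContDiff ℝ (⊤:ℕ∞) (w2 u0 u1) :=
  (pd_contDiff h1 0).sub (pd_contDiff h0 1)
lemma aa2_contDiff (h0 : ContDiff ℝ (⊤:ℕ∞) u0) (h1 : ContDiff ℝ (⊤:ℕ∞) u1) : ContDiff ℝ (⊤:ℕ∞) (aa2 u0 u1) :=
  (h0.mul (pd_contDiff h0 0)).add (h1.mul (pd_contDiff h0 1))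
lemma bb2_contDiff (h0 : ContDiff ℝ (⊤:ℕ∞) u0) (h1 : ContDiff ℝ (⊤:ℕ∞) u1) : ContDiff ℝ (⊤:ℕ∞) (bb2 u0 u1) :=
  (h0.mul (pd_contDiff h1 0)).add (h1.mul (pd_contDiff h1 1))
lemma FF0_contDiff (h0 : ContDiff ℝ (⊤:ℕ∞) u0) (h1 : ContDiff ℝ (⊤:ℕ∞) u1) : ContDiff ℝ (⊤:ℕ∞) (FF0 u0 u1) :=
  ((bb2_contDiff h0 h1).mul (w2_contDiff h0 h1)).sub
    ((h0.mul ((w2_contDiff h0 h1).mul (w2_contDiff h0 h1))).div_const 2)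
lemma FF1_contDiff (h0 : ContDiff ℝ (⊤:ℕ∞) u0) (h1 : ContDiff ℝ (⊤:ℕ∞) u1) : ContDiff ℝ (⊤:ℕ∞) (FF1 u0 u1) :=
  (((aa2_contDiff h0 h1).mul (w2_contDiff h0 h1)).neg).sub
    ((h1.mul ((w2_contDiff h0 h1).mul (w2_contDiff h0 h1))).div_const 2)

lemma w2_per (h0 : ContDiff ℝ (⊤:ℕ∞) u0) (h1 : ContDiff ℝ (⊤:ℕ∞) u1) (hp0 : Per2 u0) (hp1 : Per2 u1) : Per2 (w2 u0 u1) := by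
  intro x i
  unfold w2
  rw [pd_per (h1.differentiable hone) hp1 0 x i, pd_per (h0.differentiable hone) hp0 1 x i]
lemma aa2_per (h0 : ContDiff ℝ (⊤:ℕ∞) u0) (h1 : ContDiff ℝ (⊤:ℕ∞) u1) (hp0 : Per2 u0) (hp1 : Per2 u1) : Per2 (aa2 u0 u1) := by
  intro x i
  unfold aa2
  rw [pd_per (h0.differentiable hone) hp0 0 x i, pd_per (h0.differentiable hone) hp0 1 x i,
    hp0 x i, hp1 x i]
lemma bb2_per (h0 : ContDiff ℝ (⊤:ℕ∞) u0) (h1 : ContDiff ℝ (⊤:ℕ∞) u1) (hp0 : Per2 u0) (hp1 : Per2 u1) : Per2 (bb2 u0 u1) := by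
  intro x i
  unfold bb2
  rw [pd_per (h1.differentiable hone) hp1 0 x i, pd_per (h1.differentiable hone) hp1 1 x i,
    hp0 x i, hp1 x i]
lemma FF0_per (h0 : ContDiff ℝ (⊤:ℕ∞) u0) (h1 : ContDiff ℝ (⊤:ℕ∞) u1) (hp0 : Per2 u0) (hp1 : Per2 u1) : Per2 (FF0 u0 u1) := by
  intro x i
  unfold FF0
  rw [bb2_per h0 h1 hp0 hp1 x i, w2_per h0 h1 hp0 hp1 x i, hp0 x i]
lemma FF1_per (h0 : ContDiff ℝ (⊤:ℕ∞) u0) (h1 : ContDiff ℝ (⊤:ℕ∞) u1) (hp0 : Per2 u0) (hp1 : Per2 u1) : Per2 (FF1 u0 u1) := by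
  intro x i
  unfold FF1
  rw [aa2_per h0 h1 hp0 hp1 x i, w2_per h0 h1 hp0 hp1 x i, hp1 x i]

end smoothness

lemma key_identity (u0 u1 : E2 → ℝ) (h0 : ContDiff ℝ (⊤:ℕ∞) u0) (h1 : ContDiff ℝ (⊤:ℕ∞) u1)
    (hdiv : ∀ y, pd 0 u0 y + pd 1 u1 y = 0) (x : E2) :
    (u0 x * pd 0 u0 x + u1 x * pd 1 u0 x) * (pd 0 (pd 0 u0) x + pd 1 (pd 1 u0) x)
      + (u0 x * pd 0 u1 x + u1 x * pd 1 u1 x) * (pd 0 (pd 0 u1) x + pd 1 (pd 1 u1) x)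
      = pd 0 (FF0 u0 u1) x + pd 1 (FF1 u0 u1) x := by
  have hd0 : Differentiable ℝ u0 := h0.differentiable hone
  have hd1 : Differentiable ℝ u1 := h1.differentiable hone
  have hd00 : Differentiable ℝ (pd 0 u0) := (pd_contDiff h0 0).differentiable hone
  have hd01 : Differentiable ℝ (pd 1 u0) := (pd_contDiff h0 1).differentiable hone
  have hd10 : Differentiable ℝ (pd 0 u1) := (pd_contDiff h1 0).differentiable hone
  have hd11 : Differentiable ℝ (pd 1 u1) := (pd_contDiff h1 1).differentiable hone
  have hdd : ∀ i : Fin 2, pd i (pd 0 u0) x + pd i (pd 1 u1) x = 0 := by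
    intro i
    have hfun : (fun y => pd 0 u0 y + pd 1 u1 y) = (fun _ : E2 => (0:ℝ)) := funext hdiv
    have hthis : pd i (fun y => pd 0 u0 y + pd 1 u1 y) x = pd i (pd 0 u0) x + pd i (pd 1 u1) x :=
      pd_add (hd00 x) (hd11 x) i
    rw [hfun] at hthis
    have hzero : pd i (fun _ : E2 => (0:ℝ)) x = 0 := by simp [pd]
    rw [hzero] at hthis
    linarith
  have h1' : pd 1 u1 x = -(pd 0 u0 x) := by have := hdiv x; linarith
  have hs0 : pd 0 (pd 1 u0) x = pd 1 (pd 0 u0) x := pd_comm h0 0 1 x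
  have hs1 : pd 0 (pd 1 u1) x = pd 1 (pd 0 u1) x := pd_comm h1 0 1 x
  have hA : pd 1 (pd 0 u1) x = -(pd 0 (pd 0 u0) x) := by
    have := hdd 0; rw [hs1] at this; linarith
  have hB : pd 1 (pd 1 u1) x = -(pd 1 (pd 0 u0) x) := by
    have := hdd 1; linarith
  unfold FF0 FF1 bb2 aa2 w2
  simp (disch := fun_prop) only [pd_sub, pd_add, pd_mul, pd_div_const, pd_neg]
  simp only [h1', hs0, hs1, hA, hB]
  ring

/-- For a smooth, `2π`-periodic, divergence-free `u : ℝ² → ℝ²`,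
`∫_Q ((u·∇)u)·Δu dx = 0`, i.e. `(B(u,u), Au)_{L²} = 0`. -/
theorem stmt3 (u : E2 → Fin 2 → ℝ) (hu : ContDiff ℝ (⊤ : ℕ∞) u) (hper : Per2 u)
    (hdiv : ∀ x, ∑ j : Fin 2, pd j (fun y => u y j) x = 0) :
    ∫ x in Q2, ∑ i : Fin 2,
        (∑ j : Fin 2, u x j * pd j (fun y => u y i) x) * lap (fun y => u y i) x = 0 := by
  have h0 : ContDiff ℝ (⊤:ℕ∞) (fun y => u y 0) := contDiff_pi.1 hu 0
  have h1 : ContDiff ℝ (⊤:ℕ∞) (fun y => u y 1) := contDiff_pi.1 hu 1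
  have hp0 : Per2 (fun y => u y 0) := fun x i => congrFun (hper x i) 0
  have hp1 : Per2 (fun y => u y 1) := fun x i => congrFun (hper x i) 1
  have hdiv' : ∀ y, pd 0 (fun y => u y 0) y + pd 1 (fun y => u y 1) y = 0 := by
    intro y
    have := hdiv y
    simpa [Fin.sum_univ_two] using this
  have hkey := key_identity (fun y => u y 0) (fun y => u y 1) h0 h1 hdiv'
  have hzero := int_pd_zero (FF0 (fun y => u y 0) (fun y => u y 1))
    (FF1 (fun y => u y 0) (fun y => u y 1)) (FF0_contDiff h0 h1) (FF1_contDiff h0 h1)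
    (FF0_per h0 h1 hp0 hp1) (FF1_per h0 h1 hp0 hp1)
  rw [← hzero]
  refine MeasureTheory.integral_congr_ae (Filter.Eventually.of_forall fun x => ?_)
  simp only [Fin.sum_univ_two, lap]
  exact hkey x
end
end

section
/- Let φ : ℝ² → ℝ be a Schwartz function. Then for every x ∈ ℝ² the pointwise identity 2 φ(x) Λφ(x) = Λ(φ²)(x) + D[φ](x) holds, where D[φ](x) = c ∫_{ℝ²} (φ(x) − φ(y))² / |x−y|³ dy is a convergent integral (with the same constant c as in the definition of Λ); in particular D[φ](x) ≥ 0, so φ(x)Λφ(x) ≥ ½ Λ(φ²)(x). -/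
open MeasureTheory Filter Topology Real Set
open scoped RealInnerProductSpace
noncomputable section

/-- `v` is the value at `x` of the half-Laplacian `Λ = (−Δ)^{1/2}` of `g`, defined as the
principal value `Λg(x) = c lim_{δ→0⁺} ∫_{|x−y|>δ} (g(x) − g(y))/|x−y|³ dy`. -/
def IsHalfLapAt (c : ℝ) (g : E2 → ℝ) (x : E2) (v : ℝ) : Prop :=
  Tendsto (fun δ : ℝ => c * ∫ y in {y : E2 | δ < dist x y}, (g x - g y) / dist x y ^ 3)
    (nhdsWithin 0 (Set.Ioi 0)) (𝓝 v)
lemma integrable_min_bound (x : E2) {a b : ℝ} (ha : 0 ≤ a) (hb : 0 ≤ b) :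
    Integrable (fun y : E2 => min (a / dist x y) (b / dist x y ^ 3)) volume := by
  have hd : Measurable fun y : E2 => dist x y := (continuous_const.dist continuous_id).measurable
  have hmeas : Measurable fun y : E2 => min (a / dist x y) (b / dist x y ^ 3) :=
    (measurable_const.div hd).min (measurable_const.div (hd.pow_const 3))
  have hnn : ∀ y : E2, 0 ≤ min (a / dist x y) (b / dist x y ^ 3) := fun y =>
    le_min (by positivity) (by positivity)
  refine ⟨hmeas.aestronglyMeasurable, ?_⟩
  rw [hasFiniteIntegral_iff_ofReal (ae_of_all _ hnn),
    lintegral_eq_lintegral_meas_le volume (ae_of_all _ hnn) hmeas.aemeasurable]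
  set mB := volume (Metric.ball (0:E2) 1) with hmB
  have hmB_lt : mB < ⊤ := measure_ball_lt_top
  have hdim : Module.finrank ℝ E2 = 2 := finrank_euclideanSpace_fin
  have key : ∀ t r : ℝ, 0 ≤ r →
      (∀ y : E2, t ≤ min (a / dist x y) (b / dist x y ^ 3) → dist x y ≤ r) →
      volume {y : E2 | t ≤ min (a / dist x y) (b / dist x y ^ 3)} ≤ ENNReal.ofReal (r ^ 2) * mB := by
    intro t r hr hsub
    calc volume {y : E2 | t ≤ min (a / dist x y) (b / dist x y ^ 3)}
        ≤ volume (Metric.closedBall x r) := by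
          refine measure_mono fun y hy => ?_
          rw [Metric.mem_closedBall, dist_comm]
          exact hsub y hy
      _ = ENNReal.ofReal (r ^ 2) * mB := by
          rw [Measure.addHaar_closedBall volume x hr, hdim]
  have hdpos : ∀ (t : ℝ) (y : E2), 0 < t →
      t ≤ min (a / dist x y) (b / dist x y ^ 3) → 0 < dist x y := by
    intro t y ht hy
    rcases eq_or_lt_of_le (dist_nonneg (x := x) (y := y)) with h | h
    · exfalso
      rw [← h] at hy
      simp at hy
      linarith
    · exact h
  have hsub_b : ∀ t : ℝ, 0 < t → ∀ y : E2, t ≤ min (a / dist x y) (b / dist x y ^ 3) →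
      dist x y ≤ (b / t) ^ ((1:ℝ)/3) := by
    intro t ht y hy
    have hd0 : 0 < dist x y := hdpos t y ht hy
    have h1 : t ≤ b / dist x y ^ 3 := le_trans hy (min_le_right _ _)
    have h2 : dist x y ^ 3 ≤ b / t := by
      rw [le_div_iff₀ ht]
      rw [le_div_iff₀ (by positivity)] at h1
      linarith [h1]
    have hr : (0:ℝ) ≤ (b / t) ^ ((1:ℝ)/3) := Real.rpow_nonneg (by positivity) _
    have h3 : ((b / t) ^ ((1:ℝ)/3)) ^ 3 = b / t := by
      rw [← Real.rpow_natCast ((b / t) ^ ((1:ℝ)/3)) 3, ← Real.rpow_mul (by positivity)]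
      norm_num
    have := h2.trans_eq h3.symm
    exact le_of_pow_le_pow_left₀ (by norm_num) hr this
  have hsub_a : ∀ t : ℝ, 0 < t → ∀ y : E2, t ≤ min (a / dist x y) (b / dist x y ^ 3) →
      dist x y ≤ a / t := by
    intro t ht y hy
    have hd0 : 0 < dist x y := hdpos t y ht hy
    have h1 : t ≤ a / dist x y := le_trans hy (min_le_left _ _)
    rw [le_div_iff₀ hd0] at h1
    rw [le_div_iff₀ ht]
    linarith
  calc ∫⁻ t in Ioi (0:ℝ), volume {y : E2 | t ≤ min (a / dist x y) (b / dist x y ^ 3)}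
      ≤ ∫⁻ t in Ioc (0:ℝ) 1 ∪ Ioi 1,
          volume {y : E2 | t ≤ min (a / dist x y) (b / dist x y ^ 3)} :=
        lintegral_mono_set Ioi_subset_Ioc_union_Ioi
    _ ≤ (∫⁻ t in Ioc (0:ℝ) 1, volume {y : E2 | t ≤ min (a / dist x y) (b / dist x y ^ 3)}) +
        ∫⁻ t in Ioi (1:ℝ), volume {y : E2 | t ≤ min (a / dist x y) (b / dist x y ^ 3)} :=
        lintegral_union_le _ _ _
    _ < ⊤ := by
        refine ENNReal.add_lt_top.2 ⟨?_, ?_⟩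
        · calc ∫⁻ t in Ioc (0:ℝ) 1, volume {y : E2 | t ≤ min (a / dist x y) (b / dist x y ^ 3)}
              ≤ ∫⁻ t in Ioc (0:ℝ) 1, ENNReal.ofReal (((b / t) ^ ((1:ℝ)/3)) ^ 2) * mB := by
                refine setLIntegral_mono' measurableSet_Ioc fun t ht => ?_
                exact key t _ (Real.rpow_nonneg (div_nonneg hb ht.1.le) _) (hsub_b t ht.1)
            _ = (∫⁻ t in Ioc (0:ℝ) 1, ENNReal.ofReal (((b / t) ^ ((1:ℝ)/3)) ^ 2)) * mB :=
                lintegral_mul_const' mB _ hmB_lt.ne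
            _ < ⊤ := by
                refine ENNReal.mul_lt_top (IntegrableOn.setLIntegral_lt_top ?_) hmB_lt
                have h0 : IntegrableOn (fun t : ℝ => t ^ (-((2:ℝ)/3))) (Ioc 0 1) :=
                  (intervalIntegrable_iff_integrableOn_Ioc_of_le zero_le_one).1
                    (intervalIntegral.intervalIntegrable_rpow' (by norm_num))
                have hInt : IntegrableOn (fun t : ℝ => b ^ ((2:ℝ)/3) * t ^ (-((2:ℝ)/3))) (Ioc 0 1) :=
                  h0.const_mul _
                refine hInt.congr_fun (fun t ht => ?_) measurableSet_Ioc
                dsimp only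
                rw [← Real.rpow_natCast ((b / t) ^ ((1:ℝ)/3)) 2,
                  ← Real.rpow_mul (div_nonneg hb ht.1.le), Real.div_rpow hb ht.1.le,
                  Real.rpow_neg ht.1.le, div_eq_mul_inv]
                norm_num [div_eq_mul_inv]
        · calc ∫⁻ t in Ioi (1:ℝ), volume {y : E2 | t ≤ min (a / dist x y) (b / dist x y ^ 3)}
              ≤ ∫⁻ t in Ioi (1:ℝ), ENNReal.ofReal ((a / t) ^ 2) * mB := by
                refine setLIntegral_mono' measurableSet_Ioi fun t ht => ?_
                have ht0 : (0:ℝ) < t := lt_trans zero_lt_one ht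
                exact key t _ (div_nonneg ha ht0.le) (hsub_a t ht0)
            _ = (∫⁻ t in Ioi (1:ℝ), ENNReal.ofReal ((a / t) ^ 2)) * mB :=
                lintegral_mul_const' mB _ hmB_lt.ne
            _ < ⊤ := by
                refine ENNReal.mul_lt_top (IntegrableOn.setLIntegral_lt_top ?_) hmB_lt
                have hInt : IntegrableOn (fun t : ℝ => a ^ 2 * t ^ (-2:ℝ)) (Ioi 1) :=
                  Integrable.const_mul (integrableOn_Ioi_rpow_of_lt (by norm_num) zero_lt_one) _
                refine hInt.congr_fun (fun t ht => ?_) measurableSet_Ioi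
                have ht0 : (0:ℝ) < t := lt_trans zero_lt_one ht
                have h2 : t ^ (-2:ℝ) = (t ^ 2)⁻¹ := by
                  rw [show (-2:ℝ) = -((2:ℕ):ℝ) by norm_num, Real.rpow_neg ht0.le,
                    Real.rpow_natCast]
                dsimp only
                rw [h2, div_pow]
                ring

lemma tendsto_trunc (f : E2 → ℝ) (hf : Integrable f volume) (hpos : ∀ y, 0 ≤ f y) (x : E2) :
    Tendsto (fun δ : ℝ => ∫ y in {y : E2 | δ < dist x y}, f y)
      (nhdsWithin 0 (Set.Ioi 0)) (𝓝 (∫ y, f y)) := by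
  have hdc : Continuous fun y : E2 => dist x y := continuous_const.dist continuous_id
  have hAm : ∀ δ : ℝ, MeasurableSet {y : E2 | δ < dist x y} := fun δ =>
    (isOpen_lt continuous_const hdc).measurableSet
  set s : ℕ → Set E2 := fun n => {y : E2 | 1 / (n + 1 : ℝ) < dist x y} with hs
  have hmono : Monotone s := by
    intro n m hnm y hy
    simp only [hs, mem_setOf_eq] at hy ⊢
    refine lt_of_le_of_lt ?_ hy
    have : (n:ℝ) + 1 ≤ (m:ℝ) + 1 := by exact_mod_cast Nat.succ_le_succ hnm
    exact one_div_le_one_div_of_le (by positivity) this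
  have hUnion : (⋃ n, s n) = {y : E2 | y ≠ x} := by
    ext y
    simp only [mem_iUnion, hs, mem_setOf_eq, ne_eq]
    constructor
    · rintro ⟨n, hn⟩ h
      rw [h] at hn
      simp at hn
      linarith [hn, Nat.cast_nonneg (α := ℝ) n]
    · intro h
      have hd : 0 < dist x y := by
        rw [dist_pos]
        exact fun hh => h hh.symm
      obtain ⟨n, hn⟩ := exists_nat_one_div_lt hd
      exact ⟨n, hn⟩
  have hint_union : ∫ y in ⋃ n, s n, f y = ∫ y, f y := by
    rw [hUnion, show {y : E2 | y ≠ x} = {x}ᶜ from rfl, restrict_compl_singleton]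
  have htend : Tendsto (fun n => ∫ y in s n, f y) atTop (𝓝 (∫ y, f y)) := by
    rw [← hint_union]
    exact tendsto_setIntegral_of_monotone (fun n => hAm _) hmono hf.integrableOn
  rw [Metric.tendsto_nhdsWithin_nhds]
  intro ε hε
  have : ∀ᶠ n in atTop, dist (∫ y in s n, f y) (∫ y, f y) < ε :=
    (Metric.tendsto_nhds.1 htend) ε hε
  obtain ⟨n, hn⟩ := this.exists
  refine ⟨1 / (n + 1 : ℝ), by positivity, fun δ hδ hδd => ?_⟩
  have hδpos : 0 < δ := hδ
  have hδlt : δ < 1 / (n + 1 : ℝ) := by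
    rw [Real.dist_eq, sub_zero, abs_of_pos hδpos] at hδd
    exact hδd
  have hsub : s n ⊆ {y : E2 | δ < dist x y} := fun y hy => lt_trans hδlt hy
  have h1 : ∫ y in s n, f y ≤ ∫ y in {y : E2 | δ < dist x y}, f y :=
    setIntegral_mono_set (hf.integrableOn) (ae_of_all _ hpos) (HasSubset.Subset.eventuallyLE hsub)
  have h2 : ∫ y in {y : E2 | δ < dist x y}, f y ≤ ∫ y, f y :=
    setIntegral_le_integral hf (ae_of_all _ hpos)
  have h3 : ∫ y in s n, f y ≤ ∫ y, f y := setIntegral_le_integral hf (ae_of_all _ hpos)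
  rw [Real.dist_eq] at hn ⊢
  rw [abs_sub_lt_iff] at hn ⊢
  constructor <;> [linarith [h2]; linarith [h1, hn.2]]

/-- The pointwise Córdoba–Córdoba identity: for Schwartz `φ`,
`2φ(x)Λφ(x) = Λ(φ²)(x) + D[φ](x)` with `D[φ](x) = c∫ (φ(x)−φ(y))²/|x−y|³ dy` a
convergent integral; in particular `D[φ](x) ≥ 0`, so `φ(x)Λφ(x) ≥ ½Λ(φ²)(x)`. -/
theorem stmt7 (c : ℝ) (hc : 0 < c) (φ : SchwartzMap E2 ℝ) (Λφ Λφsq : E2 → ℝ)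
    (hΛφ : ∀ x, IsHalfLapAt c (⇑φ) x (Λφ x))
    (hΛφsq : ∀ x, IsHalfLapAt c (fun y => (φ y)^2) x (Λφsq x)) (x : E2) :
    Integrable (fun y : E2 => (φ x - φ y)^2 / dist x y ^ 3) volume ∧
    2 * φ x * Λφ x = Λφsq x + c * ∫ y : E2, (φ x - φ y)^2 / dist x y ^ 3 ∧
    0 ≤ c * ∫ y : E2, (φ x - φ y)^2 / dist x y ^ 3 ∧
    (1/2) * Λφsq x ≤ φ x * Λφ x := by
  have hdc : Continuous fun y : E2 => dist x y := continuous_const.dist continuous_id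
  have hdm : Measurable fun y : E2 => dist x y := hdc.measurable
  have hAm : ∀ δ : ℝ, MeasurableSet {y : E2 | δ < dist x y} := fun δ =>
    (isOpen_lt continuous_const hdc).measurableSet
  -- bounds on φ
  obtain ⟨M₀, hM₀⟩ := φ.decay 0 0
  have hM : ∀ y : E2, |φ y| ≤ M₀ := by
    intro y
    have := hM₀.2 y
    simpa [norm_iteratedFDeriv_zero] using this
  have hM0 : 0 ≤ M₀ := le_trans (abs_nonneg _) (hM x)
  obtain ⟨L, hL⟩ := φ.decay 0 1
  have hL' : ∀ y : E2, ‖iteratedFDeriv ℝ 1 (⇑φ) y‖ ≤ L := by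
    intro y
    simpa using hL.2 y
  have hL0 : 0 ≤ L := le_trans (norm_nonneg _) (hL' x)
  have hfd : ∀ y : E2, ‖fderiv ℝ (⇑φ) y‖ ≤ L := by
    intro y
    refine ContinuousLinearMap.opNorm_le_bound _ hL0 fun v => ?_
    have h1 : fderiv ℝ (⇑φ) y v = iteratedFDeriv ℝ 1 (⇑φ) y (fun _ => v) := by
      rw [iteratedFDeriv_one_apply]
    rw [h1]
    calc ‖iteratedFDeriv ℝ 1 (⇑φ) y fun _ => v‖
        ≤ ‖iteratedFDeriv ℝ 1 (⇑φ) y‖ * ∏ _i : Fin 1, ‖v‖ :=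
          ContinuousMultilinearMap.le_opNorm _ _
      _ ≤ L * ‖v‖ := by
          simp only [Finset.prod_const, Finset.card_univ, Fintype.card_fin, pow_one]
          exact mul_le_mul_of_nonneg_right (hL' y) (norm_nonneg v)
  have hLip : ∀ y : E2, |φ x - φ y| ≤ L * dist x y := by
    intro y
    have := Convex.norm_image_sub_le_of_norm_fderiv_le (s := (univ : Set E2))
      (fun w _ => φ.differentiableAt) (fun w _ => hfd w) convex_univ (mem_univ y) (mem_univ x)
    simpa [Real.norm_eq_abs, dist_eq_norm] using this
  have hbd : ∀ y : E2, |φ x - φ y| ≤ 2 * M₀ := by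
    intro y
    have h1 := hM x
    have h2 := hM y
    have h3 : |φ x - φ y| ≤ |φ x| + |φ y| := by
      rw [sub_eq_add_neg]
      exact (abs_add_le _ _).trans (by rw [abs_neg])
    linarith
  -- the Dirichlet-type integrand
  set f : E2 → ℝ := fun y => (φ x - φ y)^2 / dist x y ^ 3 with hf
  have hfpos : ∀ y, 0 ≤ f y := fun y => by positivity
  have hfmeas : Measurable f :=
    (((continuous_const.sub φ.continuous).pow 2).measurable).div (hdm.pow_const 3)
  have hfbound : ∀ y : E2, ‖f y‖ ≤ min (L^2 / dist x y) ((2*M₀)^2 / dist x y ^ 3) := by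
    intro y
    rw [Real.norm_eq_abs, abs_of_nonneg (hfpos y)]
    rcases eq_or_lt_of_le (dist_nonneg (x := x) (y := y)) with h | h
    · have h0 : dist x y = 0 := h.symm
      rw [hf]
      simp [h0]
    · refine le_min ?_ ?_
      · have hnum : (φ x - φ y)^2 ≤ (L * dist x y)^2 := by
          have h1 := hLip y
          nlinarith [abs_nonneg (φ x - φ y), sq_abs (φ x - φ y)]
        calc (φ x - φ y)^2 / dist x y ^ 3 ≤ (L * dist x y)^2 / dist x y ^ 3 :=
              (div_le_div_iff_of_pos_right (by positivity)).2 hnum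
          _ = L^2 / dist x y := by
              field_simp
      · have hnum : (φ x - φ y)^2 ≤ (2*M₀)^2 := by
          have h1 := hbd y
          nlinarith [abs_nonneg (φ x - φ y), sq_abs (φ x - φ y)]
        exact (div_le_div_iff_of_pos_right (by positivity)).2 hnum
  have hfint : Integrable f volume :=
    (integrable_min_bound x (by positivity) (by positivity)).mono'
      hfmeas.aestronglyMeasurable (ae_of_all _ hfbound)
  have htr : Tendsto (fun δ : ℝ => ∫ y in {y : E2 | δ < dist x y}, f y)
      (nhdsWithin 0 (Set.Ioi 0)) (𝓝 (∫ y, f y)) := tendsto_trunc f hfint hfpos x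
  -- integrability of the kernel integrand away from x
  have hg1int : ∀ δ : ℝ, 0 < δ →
      IntegrableOn (fun y : E2 => (φ x - φ y) / dist x y ^ 3) {y : E2 | δ < dist x y} volume := by
    intro δ hδ
    have hbase := (integrable_min_bound x (a := L/δ) (b := 2*M₀)
      (by positivity) (by positivity)).restrict (s := {y : E2 | δ < dist x y})
    refine hbase.mono' ?_ ?_
    · exact (((continuous_const.sub φ.continuous).measurable).div
        (hdm.pow_const 3)).aestronglyMeasurable
    · rw [ae_restrict_iff' (hAm δ)]
      refine ae_of_all _ fun y hy => ?_
      have hdpos : 0 < dist x y := lt_trans hδ hy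
      have habs : ‖(φ x - φ y) / dist x y ^ 3‖ = |φ x - φ y| / dist x y ^ 3 := by
        rw [Real.norm_eq_abs, abs_div, abs_of_pos (by positivity : (0:ℝ) < dist x y ^ 3)]
      rw [habs]
      refine le_min ?_ ?_
      · have e1 : |φ x - φ y| / dist x y ^ 3 ≤ (L * dist x y) / dist x y ^ 3 :=
          (div_le_div_iff_of_pos_right (by positivity)).2 (hLip y)
        have e2 : L * dist x y / dist x y ^ 3 = L / dist x y ^ 2 := by
          field_simp
        have e3 : L / dist x y ^ 2 ≤ L / (δ * dist x y) := by
          have hyd : δ < dist x y := hy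
          apply div_le_div_of_nonneg_left hL0 (by positivity)
          · nlinarith [hyd, hdpos]
        have e4 : (L / δ) / dist x y = L / (δ * dist x y) := div_div _ _ _
        rw [e4]
        linarith [e1, e2 ▸ e1]
      · exact (div_le_div_iff_of_pos_right (by positivity)).2 (hbd y)
  -- pointwise algebraic identity
  have hptwise : ∀ y : E2, ((φ x)^2 - (φ y)^2) / dist x y ^ 3
      = 2 * φ x * ((φ x - φ y) / dist x y ^ 3) - f y := by
    intro y
    rw [hf, ← mul_div_assoc, ← sub_div]
    congr 1
    ring
  -- truncated integral identity
  have hId : ∀ δ : ℝ, 0 < δ →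
      c * ∫ y in {y : E2 | δ < dist x y}, ((φ x)^2 - (φ y)^2) / dist x y ^ 3
      = 2 * φ x * (c * ∫ y in {y : E2 | δ < dist x y}, (φ x - φ y) / dist x y ^ 3)
        - c * ∫ y in {y : E2 | δ < dist x y}, f y := by
    intro δ hδ
    have e1 : ∫ y in {y : E2 | δ < dist x y}, ((φ x)^2 - (φ y)^2) / dist x y ^ 3
        = ∫ y in {y : E2 | δ < dist x y},
            (2 * φ x * ((φ x - φ y) / dist x y ^ 3) - f y) :=
      integral_congr_ae (ae_of_all _ fun y => hptwise y)
    rw [e1, integral_sub ((hg1int δ hδ).const_mul _) hfint.integrableOn,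
      integral_const_mul]
    ring
  have h1 := hΛφ x
  have h2 := hΛφsq x
  rw [IsHalfLapAt] at h1 h2
  have h3 : Tendsto (fun δ : ℝ =>
      2 * φ x * (c * ∫ y in {y : E2 | δ < dist x y}, (φ x - φ y) / dist x y ^ 3)
        - c * ∫ y in {y : E2 | δ < dist x y}, f y)
      (nhdsWithin 0 (Set.Ioi 0)) (𝓝 (2 * φ x * Λφ x - c * ∫ y, f y)) :=
    (h1.const_mul (2 * φ x)).sub (htr.const_mul c)
  have h4 : Tendsto (fun δ : ℝ =>
      c * ∫ y in {y : E2 | δ < dist x y}, ((φ x)^2 - (φ y)^2) / dist x y ^ 3)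
      (nhdsWithin 0 (Set.Ioi 0)) (𝓝 (2 * φ x * Λφ x - c * ∫ y, f y)) := by
    refine h3.congr' ?_
    filter_upwards [self_mem_nhdsWithin] with δ hδ
    exact (hId δ hδ).symm
  have hkey : Λφsq x = 2 * φ x * Λφ x - c * ∫ y, f y := tendsto_nhds_unique h2 h4
  have hnn : 0 ≤ c * ∫ y, f y := mul_nonneg hc.le (integral_nonneg hfpos)
  exact ⟨hfint, by linarith, hnn, by linarith⟩
end
end

section
/- Let φ : ℝ² → ℝ be a Schwartz function and let p ≥ 2 be an even integer. Then ∫_{ℝ²} φ(x)^{p−1} Λφ(x) dx ≥ 0. The same conclusion holds for every integer p ≥ 2 provided φ is nonnegative. -/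
open MeasureTheory Filter Topology Real Set
open scoped RealInnerProductSpace
noncomputable section

lemma dyadic_bound (x : E2) {δ : ℝ} (hδ : 0 < δ) :
    ∫⁻ y in {y : E2 | 0 < dist x y ∧ dist x y ≤ δ}, ENNReal.ofReal (dist x y)⁻¹ ≤
      ENNReal.ofReal (4 * δ) * volume (Metric.ball (0:E2) 1) := by
  set V := volume (Metric.ball (0:E2) 1) with hV
  set A : ℕ → Set E2 := fun k => {y | δ / 2 ^ (k+1) < dist x y ∧ dist x y ≤ δ / 2 ^ k} with hA
  have hcover : {y : E2 | 0 < dist x y ∧ dist x y ≤ δ} ⊆ ⋃ k, A k := by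
    rintro y ⟨h0, h1⟩
    have hex : ∃ k : ℕ, δ / 2 ^ (k+1) < dist x y := by
      obtain ⟨n, hn⟩ := exists_pow_lt_of_lt_one (div_pos h0 hδ) (by norm_num : (1:ℝ)/2 < 1)
      refine ⟨n, ?_⟩
      have : δ * (1/2) ^ (n+1) < δ * (dist x y / δ) := by
        apply mul_lt_mul_of_pos_left _ hδ
        calc (1/2:ℝ) ^ (n+1) ≤ (1/2)^n := by
              apply pow_le_pow_of_le_one (by norm_num) (by norm_num) (Nat.le_succ n)
          _ < _ := hn
      rw [mul_div_cancel₀ _ hδ.ne'] at this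
      calc δ / 2 ^ (n+1) = δ * (1/2) ^ (n+1) := by rw [div_pow, one_pow]; ring
        _ < dist x y := this
    refine mem_iUnion.2 ⟨Nat.find hex, Nat.find_spec hex, ?_⟩
    rcases Nat.eq_zero_or_pos (Nat.find hex) with h | h
    · simpa [h] using h1
    · have hlt : Nat.find hex - 1 < Nat.find hex := Nat.sub_lt h one_pos
      have := Nat.find_min hex hlt
      push_neg at this
      calc dist x y ≤ δ / 2 ^ (Nat.find hex - 1 + 1) := this
        _ = δ / 2 ^ Nat.find hex := by congr 2; omega
  have hterm : ∀ k : ℕ, (∫⁻ y in A k, ENNReal.ofReal (dist x y)⁻¹) ≤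
      ENNReal.ofReal (2 * δ) * (ENNReal.ofReal 2⁻¹) ^ k * V := by
    intro k
    have h2k : (0:ℝ) < δ / 2 ^ (k+1) := by positivity
    have hle : (∫⁻ y in A k, ENNReal.ofReal (dist x y)⁻¹) ≤
        (∫⁻ _ in A k, ENNReal.ofReal (2 ^ (k+1) / δ)) := by
      apply setLIntegral_mono measurable_const
      intro y hy
      apply ENNReal.ofReal_le_ofReal
      have h1 : (dist x y)⁻¹ ≤ (δ / 2 ^ (k+1))⁻¹ := by
        gcongr
        exact hy.1.le
      calc (dist x y)⁻¹ ≤ (δ / 2 ^ (k+1))⁻¹ := h1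
        _ = 2 ^ (k+1) / δ := by rw [inv_div]
    rw [setLIntegral_const] at hle
    have hAsub : A k ⊆ Metric.closedBall x (δ / 2 ^ k) := by
      intro y hy
      rw [Metric.mem_closedBall, dist_comm]
      exact hy.2
    have hvol : volume (A k) ≤ ENNReal.ofReal ((δ / 2 ^ k) ^ 2) * V := by
      calc volume (A k) ≤ volume (Metric.closedBall x (δ / 2 ^ k)) := measure_mono hAsub
        _ = _ := by rw [Measure.addHaar_closedBall volume x (by positivity),
            finrank_euclideanSpace_fin]
    calc (∫⁻ y in A k, ENNReal.ofReal (dist x y)⁻¹)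
        ≤ ENNReal.ofReal (2 ^ (k+1) / δ) * (ENNReal.ofReal ((δ / 2 ^ k) ^ 2) * V) := by
          refine le_trans hle ?_
          exact mul_le_mul_right hvol _
      _ = ENNReal.ofReal (2 ^ (k+1) / δ * (δ / 2 ^ k) ^ 2) * V := by
          rw [ENNReal.ofReal_mul (by positivity), mul_assoc]
      _ = ENNReal.ofReal (2 * δ * (2⁻¹) ^ k) * V := by
          congr 2
          rw [inv_pow]
          field_simp
          ring
      _ = ENNReal.ofReal (2 * δ) * (ENNReal.ofReal 2⁻¹) ^ k * V := by
          rw [ENNReal.ofReal_mul (by positivity), ENNReal.ofReal_pow (by norm_num)]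
  calc ∫⁻ y in {y : E2 | 0 < dist x y ∧ dist x y ≤ δ}, ENNReal.ofReal (dist x y)⁻¹
      ≤ ∫⁻ y in ⋃ k, A k, ENNReal.ofReal (dist x y)⁻¹ := lintegral_mono_set hcover
    _ ≤ ∑' k, ∫⁻ y in A k, ENNReal.ofReal (dist x y)⁻¹ := lintegral_iUnion_le _ _
    _ ≤ ∑' k, ENNReal.ofReal (2 * δ) * (ENNReal.ofReal 2⁻¹) ^ k * V := ENNReal.tsum_le_tsum hterm
    _ = ENNReal.ofReal (2 * δ) * (1 - ENNReal.ofReal 2⁻¹)⁻¹ * V := by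
        rw [ENNReal.tsum_mul_right, ENNReal.tsum_mul_left, ENNReal.tsum_geometric]
    _ = ENNReal.ofReal (4 * δ) * V := by
        congr 1
        have h2 : ENNReal.ofReal (2⁻¹:ℝ) = 2⁻¹ := by
          rw [ENNReal.ofReal_inv_of_pos (by norm_num)]
          norm_num
        rw [h2, ENNReal.one_sub_inv_two, inv_inv,
          ENNReal.ofReal_mul (by norm_num : (0:ℝ) ≤ 2),
          show (4:ℝ)*δ = 2*(δ*2) from by ring,
          ENNReal.ofReal_mul (by norm_num : (0:ℝ) ≤ 2),
          ENNReal.ofReal_mul hδ.le, ENNReal.ofReal_ofNat]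
        ring


lemma jap_int : Integrable (fun z : E2 => (1 + ‖z‖) ^ (-(3:ℝ))) volume := by
  apply integrable_one_add_norm (μ := volume); rw [finrank_euclideanSpace_fin]; norm_num

lemma jap_int_dist (x : E2) : Integrable (fun y : E2 => (1 + dist x y) ^ (-(3:ℝ))) volume := by
  have h := ((measurePreserving_add_right (volume : Measure E2) (-x)).integrable_comp
    jap_int.aestronglyMeasurable).2 jap_int
  have : (fun y : E2 => (1 + dist x y) ^ (-(3:ℝ))) =
      (fun z : E2 => (1 + ‖z‖) ^ (-(3:ℝ))) ∘ (fun y => y + -x) := by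
    funext y
    simp only [Function.comp_apply]
    rw [← sub_eq_add_neg, ← dist_eq_norm, dist_comm]
  rw [this]
  exact h

lemma pointwise_tail {δ : ℝ} (hδ : 0 < δ) {d : ℝ} (hd : δ < d) :
    (d ^ 3)⁻¹ ≤ (1 + δ⁻¹) ^ 3 * (1 + d) ^ (-(3:ℝ)) := by
  have hd0 : 0 < d := hδ.trans hd
  have hr : (1 + d) ^ (-(3:ℝ)) = ((1 + d) ^ (3:ℕ))⁻¹ := by
    rw [← Real.rpow_natCast (1 + d) 3, ← Real.rpow_neg (by positivity)]
    norm_num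
  rw [hr]
  have h1 : (1 + d) ^ 3 ≤ (1 + δ⁻¹) ^ 3 * d ^ 3 := by
    rw [← mul_pow]
    apply pow_le_pow_left₀ (by positivity)
    have : (1:ℝ) ≤ δ⁻¹ * d := by
      rw [← inv_mul_cancel₀ hδ.ne']
      exact mul_le_mul_of_nonneg_left hd.le (by positivity)
    nlinarith
  rw [show ((d:ℝ)^3)⁻¹ = 1 / d^3 from inv_eq_one_div _,
    show (((1+d):ℝ)^3)⁻¹ = 1/(1+d)^3 from inv_eq_one_div _, mul_one_div,
    div_le_div_iff₀ (by positivity) (by positivity)]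
  nlinarith

lemma meas_invd3 (x : E2) : Measurable (fun y : E2 => ((dist x y) ^ 3)⁻¹) :=
  (((continuous_const.dist continuous_id).pow 3).measurable).inv

lemma tail_int_invd3 (x : E2) {δ : ℝ} (hδ : 0 < δ) :
    IntegrableOn (fun y : E2 => ((dist x y) ^ 3)⁻¹) {y | δ < dist x y} volume := by
  have hs : MeasurableSet {y : E2 | δ < dist x y} :=
    measurableSet_lt measurable_const (continuous_const.dist continuous_id).measurable
  apply Integrable.mono' ((jap_int_dist x).const_mul ((1 + δ⁻¹) ^ 3)).integrableOn
    (meas_invd3 x).aestronglyMeasurable.restrict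
  refine (ae_restrict_iff' hs).2 (ae_of_all _ fun y hy => ?_)
  have hd0 : 0 < dist x y := hδ.trans hy
  rw [Real.norm_eq_abs, abs_of_nonneg (by positivity)]
  exact pointwise_tail hδ hy

lemma tail_integral_le (x : E2) {δ : ℝ} (hδ : 0 < δ) :
    ∫ y in {y : E2 | δ < dist x y}, ((dist x y) ^ 3)⁻¹ ≤
      (1 + δ⁻¹) ^ 3 * ∫ z : E2, (1 + ‖z‖) ^ (-(3:ℝ)) := by
  have hs : MeasurableSet {y : E2 | δ < dist x y} :=
    measurableSet_lt measurable_const (continuous_const.dist continuous_id).measurable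
  have h1 : ∫ y in {y : E2 | δ < dist x y}, ((dist x y) ^ 3)⁻¹ ≤
      ∫ y in {y : E2 | δ < dist x y}, (1 + δ⁻¹) ^ 3 * (1 + dist x y) ^ (-(3:ℝ)) := by
    apply setIntegral_mono_on (tail_int_invd3 x hδ)
      ((jap_int_dist x).const_mul ((1 + δ⁻¹) ^ 3)).integrableOn hs
    exact fun y hy => pointwise_tail hδ hy
  have h2 : ∫ y in {y : E2 | δ < dist x y}, (1 + δ⁻¹) ^ 3 * (1 + dist x y) ^ (-(3:ℝ)) ≤
      ∫ y : E2, (1 + δ⁻¹) ^ 3 * (1 + dist x y) ^ (-(3:ℝ)) := by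
    apply setIntegral_le_integral ((jap_int_dist x).const_mul ((1 + δ⁻¹) ^ 3))
    exact ae_of_all _ fun y => by positivity
  have h3 : ∫ y : E2, (1 + δ⁻¹) ^ 3 * (1 + dist x y) ^ (-(3:ℝ)) =
      (1 + δ⁻¹) ^ 3 * ∫ y : E2, (1 + dist x y) ^ (-(3:ℝ)) := integral_const_mul _ _
  have h4 : ∫ y : E2, (1 + dist x y) ^ (-(3:ℝ)) = ∫ z : E2, (1 + ‖z‖) ^ (-(3:ℝ)) := by
    rw [← integral_add_right_eq_self (μ := volume) (fun z : E2 => (1 + ‖z‖) ^ (-(3:ℝ))) (-x)]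
    congr 1
    funext y
    rw [← sub_eq_add_neg, ← dist_eq_norm, dist_comm]
  calc ∫ y in {y : E2 | δ < dist x y}, ((dist x y) ^ 3)⁻¹
      ≤ ∫ y in {y : E2 | δ < dist x y}, (1 + δ⁻¹) ^ 3 * (1 + dist x y) ^ (-(3:ℝ)) := h1
    _ ≤ ∫ y : E2, (1 + δ⁻¹) ^ 3 * (1 + dist x y) ^ (-(3:ℝ)) := h2
    _ = (1 + δ⁻¹) ^ 3 * ∫ y : E2, (1 + dist x y) ^ (-(3:ℝ)) := h3
    _ = _ := by rw [h4]

section Taylor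

variable (φ : SchwartzMap E2 ℝ)

lemma lip_fderiv {C₂ : ℝ} (hC₂ : ∀ u, ‖iteratedFDeriv ℝ 2 (⇑φ) u‖ ≤ C₂) (u v : E2) :
    ‖fderiv ℝ (⇑φ) u - fderiv ℝ (⇑φ) v‖ ≤ C₂ * ‖u - v‖ := by
  have h1 : ContDiff ℝ 1 (fderiv ℝ (⇑φ)) :=
    (φ.smooth ⊤).fderiv_right (m := 1) (WithTop.coe_le_coe.mpr le_top)
  have hdiff : ∀ w : E2, DifferentiableAt ℝ (fderiv ℝ (⇑φ)) w :=
    fun w => (h1.differentiable one_ne_zero).differentiableAt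
  have hb : ∀ w : E2, ‖fderiv ℝ (fderiv ℝ (⇑φ)) w‖ ≤ C₂ := fun w => by
    calc ‖fderiv ℝ (fderiv ℝ (⇑φ)) w‖
        = ‖iteratedFDeriv ℝ 0 (fderiv ℝ (fderiv ℝ (⇑φ))) w‖ := by rw [norm_iteratedFDeriv_zero]
      _ = ‖iteratedFDeriv ℝ 1 (fderiv ℝ (⇑φ)) w‖ := norm_iteratedFDeriv_fderiv
      _ = ‖iteratedFDeriv ℝ 2 (⇑φ) w‖ := norm_iteratedFDeriv_fderiv
      _ ≤ C₂ := hC₂ w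
  exact convex_univ.norm_image_sub_le_of_norm_fderiv_le (fun w _ => hdiff w)
    (fun w _ => hb w) (mem_univ v) (mem_univ u)

lemma taylor2 {C₂ : ℝ} (hC₂ : ∀ u, ‖iteratedFDeriv ℝ 2 (⇑φ) u‖ ≤ C₂) (x y : E2) :
    ‖φ y - φ x - fderiv ℝ (⇑φ) x (y - x)‖ ≤ C₂ * ‖y - x‖ * ‖y - x‖ := by
  have hC₂0 : 0 ≤ C₂ := le_trans (norm_nonneg _) (hC₂ x)
  have := convex_closedBall x ‖y - x‖ |>.norm_image_sub_le_of_norm_fderiv_le'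
    (f := ⇑φ) (φ := fderiv ℝ (⇑φ) x) (C := C₂ * ‖y - x‖)
    (fun u _ => (φ.differentiable).differentiableAt)
    (fun u hu => by
      calc ‖fderiv ℝ (⇑φ) u - fderiv ℝ (⇑φ) x‖ ≤ C₂ * ‖u - x‖ := lip_fderiv φ hC₂ u x
        _ ≤ C₂ * ‖y - x‖ := by
            apply mul_le_mul_of_nonneg_left _ hC₂0
            exact mem_closedBall_iff_norm.mp hu)
    (Metric.mem_closedBall_self (norm_nonneg _))
    (mem_closedBall_iff_norm.mpr le_rfl)
  calc ‖φ y - φ x - fderiv ℝ (⇑φ) x (y - x)‖ ≤ C₂ * ‖y - x‖ * ‖y - x‖ := this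

lemma secondDiff {C₂ : ℝ} (hC₂ : ∀ u, ‖iteratedFDeriv ℝ 2 (⇑φ) u‖ ≤ C₂) (x y : E2) :
    |2 * φ x - φ y - φ (x + x - y)| ≤ 2 * C₂ * (dist x y * dist x y) := by
  set L := fderiv ℝ (⇑φ) x with hL
  have r1 := taylor2 φ hC₂ x y
  have r2 := taylor2 φ hC₂ x (x + x - y)
  have he : (x + x - y) - x = -(y - x) := by abel
  have hLe : L ((x + x - y) - x) = -(L (y - x)) := by rw [he, map_neg]
  have hnorm : ‖(x + x - y) - x‖ = ‖y - x‖ := by rw [he, norm_neg]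
  have hdist : dist x y = ‖y - x‖ := by rw [dist_comm, dist_eq_norm]
  have hkey : 2 * φ x - φ y - φ (x + x - y) =
      -((φ y - φ x - L (y - x)) + (φ (x + x - y) - φ x - L ((x + x - y) - x))) := by
    rw [hLe]; ring
  rw [hkey, hdist]
  calc |(-((φ y - φ x - L (y - x)) + (φ (x + x - y) - φ x - L ((x + x - y) - x))))|
      ≤ |φ y - φ x - L (y - x)| + |φ (x + x - y) - φ x - L ((x + x - y) - x)| := by
        rw [abs_neg]; exact abs_add_le _ _
    _ ≤ C₂ * ‖y - x‖ * ‖y - x‖ + C₂ * ‖(x + x - y) - x‖ * ‖(x + x - y) - x‖ := add_le_add r1 r2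
    _ = 2 * C₂ * (‖y - x‖ * ‖y - x‖) := by rw [hnorm]; ring

end Taylor



lemma measurable_f (φ : SchwartzMap E2 ℝ) (x : E2) :
    Measurable (fun y : E2 => (φ x - φ y) / dist x y ^ 3) :=
  (measurable_const.sub φ.continuous.measurable).div
    ((continuous_const.dist continuous_id).pow 3).measurable

lemma measurableSet_ann (x : E2) (a b : ℝ) :
    MeasurableSet {y : E2 | a < dist x y ∧ dist x y ≤ b} := by
  have hd : Measurable (fun y : E2 => dist x y) :=
    (continuous_const.dist continuous_id).measurable
  exact (measurableSet_lt measurable_const hd).inter (measurableSet_le hd measurable_const)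

lemma ann_volume_lt_top (x : E2) (a b : ℝ) :
    volume {y : E2 | a < dist x y ∧ dist x y ≤ b} < ⊤ := by
  have hsub : {y : E2 | a < dist x y ∧ dist x y ≤ b} ⊆ Metric.closedBall x b := fun y hy => by
    rw [Metric.mem_closedBall, dist_comm]; exact hy.2
  exact lt_of_le_of_lt (measure_mono hsub) measure_closedBall_lt_top

lemma annulus_est (φ : SchwartzMap E2 ℝ) {B C₂ : ℝ}
    (hB : ∀ u, ‖φ u‖ ≤ B) (hC₂ : ∀ u, ‖iteratedFDeriv ℝ 2 (⇑φ) u‖ ≤ C₂)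
    (x : E2) {δ'' δ : ℝ} (h0 : 0 < δ'') (hle : δ'' ≤ δ) :
    |∫ y in {y : E2 | δ'' < dist x y ∧ dist x y ≤ δ}, (φ x - φ y) / dist x y ^ 3| ≤
      C₂ * (4 * δ * (volume (Metric.ball (0:E2) 1)).toReal) := by
  have hC₂0 : 0 ≤ C₂ := le_trans (norm_nonneg _) (hC₂ x)
  have hB0 : 0 ≤ B := le_trans (norm_nonneg _) (hB x)
  have hδ : 0 < δ := lt_of_lt_of_le h0 hle
  set V := volume (Metric.ball (0:E2) 1) with hV
  set A := {y : E2 | δ'' < dist x y ∧ dist x y ≤ δ} with hA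
  have hAmeas : MeasurableSet A := measurableSet_ann x δ'' δ
  have hAvol : volume A < ⊤ := ann_volume_lt_top x δ'' δ
  set f : E2 → ℝ := fun y => (φ x - φ y) / dist x y ^ 3 with hf
  have hfmeas : Measurable f := measurable_f φ x
  -- the reflection
  set T : E2 → E2 := fun y => x + x - y with hT
  have hTeq : T = fun y => (x + x) + (-y) := by funext y; simp [hT, sub_eq_add_neg]
  have hTmp : MeasurePreserving T (volume : Measure E2) volume := by
    rw [hTeq]
    exact (measurePreserving_add_left volume (x+x)).comp (Measure.measurePreserving_neg volume)
  have hTemb : MeasurableEmbedding T := by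
    rw [hTeq]
    exact ((Homeomorph.neg E2).trans (Homeomorph.addLeft (x+x))).measurableEmbedding
  have hdistT : ∀ y, dist x (T y) = dist x y := by
    intro y
    rw [dist_eq_norm, show x - T y = y - x by simp [hT]; abel, ← dist_eq_norm, dist_comm]
  have hTpre : T ⁻¹' A = A := by
    ext y
    simp only [hA, mem_preimage, mem_setOf_eq, hdistT]
  -- integrability of f on A
  have hfbound : ∀ y ∈ A, ‖f y‖ ≤ (B + B) / δ'' ^ 3 := by
    intro y hy
    have hd : δ'' < dist x y := hy.1
    have hd0 : (0:ℝ) < dist x y := lt_trans h0 hd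
    rw [hf, Real.norm_eq_abs, abs_div, abs_of_nonneg (by positivity : (0:ℝ) ≤ dist x y ^ 3)]
    apply div_le_div₀ (by linarith)
      (le_trans (abs_sub _ _) (add_le_add (hB x) (hB y))) (by positivity)
    exact pow_le_pow_left₀ h0.le hd.le 3
  have hfint : IntegrableOn f A := by
    apply Integrable.mono' (integrableOn_const (C := (B + B) / δ'' ^ 3) hAvol.ne)
      hfmeas.aestronglyMeasurable.restrict
    exact (ae_restrict_iff' hAmeas).2 (ae_of_all _ hfbound)
  have hfTint : IntegrableOn (f ∘ T) A := by
    have := (hTmp.integrableOn_comp_preimage hTemb (f := f) (s := A)).2 hfint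
    rwa [hTpre] at this
  have hrefl : ∫ y in A, f (T y) = ∫ y in A, f y := by
    have := hTmp.setIntegral_preimage_emb hTemb f A
    rwa [hTpre] at this
  -- pointwise bound for symmetrized integrand
  have hsym : ∀ y ∈ A, |f y + f (T y)| ≤ 2 * C₂ * (dist x y)⁻¹ := by
    intro y hy
    have hd0 : (0:ℝ) < dist x y := lt_trans h0 hy.1
    have hcomb : f y + f (T y) = (2 * φ x - φ y - φ (T y)) / dist x y ^ 3 := by
      rw [hf]
      simp only
      rw [hdistT, ← add_div]
      ring_nf
    rw [hcomb, abs_div, abs_of_nonneg (by positivity : (0:ℝ) ≤ dist x y ^ 3)]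
    rw [div_le_iff₀ (by positivity)]
    calc |2 * φ x - φ y - φ (T y)| ≤ 2 * C₂ * (dist x y * dist x y) := secondDiff φ hC₂ x y
      _ = 2 * C₂ * (dist x y)⁻¹ * dist x y ^ 3 := by field_simp
  -- assemble
  have hfTint' : IntegrableOn (fun y => f (T y)) A := hfTint
  have hhalf : ∫ y in A, f y = (1/2) * ∫ y in A, (f y + f (T y)) := by
    rw [integral_add hfint hfTint', hrefl]; ring
  have habs : |∫ y in A, (f y + f (T y))| ≤ ∫ y in A, |f y + f (T y)| := by
    simpa [Real.norm_eq_abs] using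
      norm_integral_le_integral_norm (μ := volume.restrict A) (f := fun y => f y + f (T y))
  have hlin : ∫ y in A, |f y + f (T y)| =
      (∫⁻ y in A, ENNReal.ofReal |f y + f (T y)|).toReal := by
    apply integral_eq_lintegral_of_nonneg_ae (ae_of_all _ fun y => abs_nonneg _)
    exact (hfmeas.add (hfmeas.comp hTmp.measurable)).abs.aestronglyMeasurable.restrict
  have hlle : (∫⁻ y in A, ENNReal.ofReal |f y + f (T y)|) ≤
      ENNReal.ofReal (2 * C₂) * (ENNReal.ofReal (4 * δ) * V) := by
    have step1 : (∫⁻ y in A, ENNReal.ofReal |f y + f (T y)|) ≤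
        ∫⁻ y in A, ENNReal.ofReal (2 * C₂) * ENNReal.ofReal (dist x y)⁻¹ := by
      apply setLIntegral_mono (by
        apply Measurable.const_mul
        exact ((continuous_const.dist continuous_id).measurable.inv).ennreal_ofReal)
      intro y hy
      rw [← ENNReal.ofReal_mul (by positivity)]
      exact ENNReal.ofReal_le_ofReal (hsym y hy)
    have step2 : ∫⁻ y in A, ENNReal.ofReal (2 * C₂) * ENNReal.ofReal (dist x y)⁻¹ =
        ENNReal.ofReal (2 * C₂) * ∫⁻ y in A, ENNReal.ofReal (dist x y)⁻¹ :=
      lintegral_const_mul _ ((continuous_const.dist continuous_id).measurable.inv).ennreal_ofReal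
    have step3 : (∫⁻ y in A, ENNReal.ofReal (dist x y)⁻¹) ≤ ENNReal.ofReal (4 * δ) * V := by
      refine le_trans (lintegral_mono_set fun y hy => ?_) (dyadic_bound x hδ)
      exact ⟨lt_trans h0 hy.1, hy.2⟩
    calc (∫⁻ y in A, ENNReal.ofReal |f y + f (T y)|) ≤ _ := step1
      _ = _ := step2
      _ ≤ _ := mul_le_mul_right step3 _
  have hVfin : ENNReal.ofReal (2 * C₂) * (ENNReal.ofReal (4 * δ) * V) ≠ ⊤ := by
    apply ENNReal.mul_ne_top ENNReal.ofReal_ne_top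
    exact ENNReal.mul_ne_top ENNReal.ofReal_ne_top (measure_ball_lt_top).ne
  have htoReal : (∫⁻ y in A, ENNReal.ofReal |f y + f (T y)|).toReal ≤
      (2 * C₂) * ((4 * δ) * V.toReal) := by
    refine le_trans (ENNReal.toReal_mono hVfin hlle) ?_
    rw [ENNReal.toReal_mul, ENNReal.toReal_mul, ENNReal.toReal_ofReal (by positivity),
      ENNReal.toReal_ofReal (by positivity)]
  calc |∫ y in A, f y| = (1/2) * |∫ y in A, (f y + f (T y))| := by
        rw [hhalf, abs_mul]; norm_num
    _ ≤ (1/2) * ((2 * C₂) * ((4 * δ) * V.toReal)) := by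
        apply mul_le_mul_of_nonneg_left _ (by norm_num)
        exact le_trans habs (by rw [hlin]; exact htoReal)
    _ = C₂ * (4 * δ * V.toReal) := by ring



/-- truncated kernel integral -/
def Fd (φ : SchwartzMap E2 ℝ) (δ : ℝ) (x : E2) : ℝ :=
  ∫ y in {y : E2 | δ < dist x y}, (φ x - φ y) / dist x y ^ 3

section FdFacts
variable (φ : SchwartzMap E2 ℝ) {δ : ℝ} (x : E2)

lemma tail_meas (x : E2) (δ : ℝ) : MeasurableSet {y : E2 | δ < dist x y} :=
  measurableSet_lt measurable_const (continuous_const.dist continuous_id).measurable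

lemma tail_f_int (hδ : 0 < δ) :
    IntegrableOn (fun y : E2 => (φ x - φ y) / dist x y ^ 3) {y | δ < dist x y} volume := by
  have heq : (fun y : E2 => (φ x - φ y) / dist x y ^ 3) =
      fun y => φ x * ((dist x y ^ 3)⁻¹) - φ y * ((dist x y ^ 3)⁻¹) := by
    funext y; rw [sub_div, div_eq_mul_inv, div_eq_mul_inv]
  rw [heq]
  apply Integrable.sub ((tail_int_invd3 x hδ).const_mul (φ x))
  have hbd : ∀ y ∈ {y : E2 | δ < dist x y}, ‖φ y * (dist x y ^ 3)⁻¹‖ ≤ ‖φ y‖ * (δ ^ 3)⁻¹ := by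
    intro y hy
    have hd : δ < dist x y := hy
    rw [norm_mul, Real.norm_eq_abs ((dist x y ^ 3)⁻¹), abs_of_nonneg (by positivity)]
    apply mul_le_mul_of_nonneg_left _ (norm_nonneg _)
    gcongr
  apply Integrable.mono' ((φ.integrable.norm.mul_const ((δ ^ 3)⁻¹)).integrableOn)
    ((φ.continuous.measurable.mul (meas_invd3 x)).aestronglyMeasurable.restrict)
  exact (ae_restrict_iff' (tail_meas x δ)).2 (ae_of_all _ hbd)

lemma norm_f_int_le {B : ℝ} (hB : ∀ u, ‖φ u‖ ≤ B) (hδ : 0 < δ) :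
    ∫ y in {y : E2 | δ < dist x y}, ‖(φ x - φ y) / dist x y ^ 3‖ ≤
      B * ((1 + δ⁻¹) ^ 3 * ∫ z : E2, (1 + ‖z‖) ^ (-(3:ℝ))) + (∫ u : E2, ‖φ u‖) * (δ ^ 3)⁻¹ := by
  set s := {y : E2 | δ < dist x y} with hs
  have hB0 : 0 ≤ B := le_trans (norm_nonneg _) (hB x)
  have hint1 : IntegrableOn (fun y => B * (dist x y ^ 3)⁻¹ + ‖φ y‖ * (δ ^ 3)⁻¹) s := by
    apply Integrable.add ((tail_int_invd3 x hδ).const_mul B)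
    exact (φ.integrable.norm.mul_const ((δ ^ 3)⁻¹)).integrableOn
  have hmono : ∀ y ∈ s, ‖(φ x - φ y) / dist x y ^ 3‖ ≤
      B * (dist x y ^ 3)⁻¹ + ‖φ y‖ * (δ ^ 3)⁻¹ := by
    intro y hy
    have hd : δ < dist x y := hy
    have hd0 : (0:ℝ) < dist x y := hδ.trans hd
    rw [Real.norm_eq_abs, abs_div, abs_of_nonneg (by positivity : (0:ℝ) ≤ dist x y ^ 3),
      div_eq_mul_inv]
    calc |φ x - φ y| * (dist x y ^ 3)⁻¹ ≤ (B + ‖φ y‖) * (dist x y ^ 3)⁻¹ := by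
          apply mul_le_mul_of_nonneg_right _ (by positivity)
          calc |φ x - φ y| ≤ ‖φ x‖ + ‖φ y‖ := abs_sub _ _
            _ ≤ B + ‖φ y‖ := by have := hB x; linarith
      _ = B * (dist x y ^ 3)⁻¹ + ‖φ y‖ * (dist x y ^ 3)⁻¹ := by ring
      _ ≤ B * (dist x y ^ 3)⁻¹ + ‖φ y‖ * (δ ^ 3)⁻¹ := by
          gcongr
  have h1 : ∫ y in s, ‖(φ x - φ y) / dist x y ^ 3‖ ≤
      ∫ y in s, (B * (dist x y ^ 3)⁻¹ + ‖φ y‖ * (δ ^ 3)⁻¹) :=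
    setIntegral_mono_on (tail_f_int φ x hδ).norm hint1 (tail_meas x δ) hmono
  have h2 : ∫ y in s, (B * (dist x y ^ 3)⁻¹ + ‖φ y‖ * (δ ^ 3)⁻¹) =
      (∫ y in s, B * (dist x y ^ 3)⁻¹) + ∫ y in s, ‖φ y‖ * (δ ^ 3)⁻¹ :=
    integral_add ((tail_int_invd3 x hδ).const_mul B)
      (φ.integrable.norm.mul_const ((δ ^ 3)⁻¹)).integrableOn
  have h3 : (∫ y in s, B * (dist x y ^ 3)⁻¹) ≤
      B * ((1 + δ⁻¹) ^ 3 * ∫ z : E2, (1 + ‖z‖) ^ (-(3:ℝ))) := by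
    rw [integral_const_mul]
    exact mul_le_mul_of_nonneg_left (tail_integral_le x hδ) hB0
  have h4 : (∫ y in s, ‖φ y‖ * (δ ^ 3)⁻¹) ≤ (∫ u : E2, ‖φ u‖) * (δ ^ 3)⁻¹ := by
    rw [integral_mul_const]
    apply mul_le_mul_of_nonneg_right _ (by positivity)
    apply setIntegral_le_integral φ.integrable.norm (ae_of_all _ fun y => norm_nonneg _)
  linarith

lemma Fd_abs_le {B : ℝ} (hB : ∀ u, ‖φ u‖ ≤ B) (hδ : 0 < δ) :
    |Fd φ δ x| ≤
      B * ((1 + δ⁻¹) ^ 3 * ∫ z : E2, (1 + ‖z‖) ^ (-(3:ℝ))) + (∫ u : E2, ‖φ u‖) * (δ ^ 3)⁻¹ := by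
  refine le_trans ?_ (norm_f_int_le φ x hB hδ)
  have h := norm_integral_le_integral_norm (μ := volume.restrict {y : E2 | δ < dist x y})
      (f := fun y => (φ x - φ y) / dist x y ^ 3)
  rw [Real.norm_eq_abs] at h
  exact h

end FdFacts

section Fubini
variable (φ : SchwartzMap E2 ℝ) {δ : ℝ}

/-- symmetric truncated kernel -/
def kk (δ : ℝ) : E2 × E2 → ℝ := fun z => if δ < dist z.1 z.2 then (dist z.1 z.2 ^ 3)⁻¹ else 0

lemma kk_meas : Measurable (kk δ) := by
  have hd : Measurable fun z : E2 × E2 => dist z.1 z.2 :=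
    (continuous_fst.dist continuous_snd).measurable
  exact Measurable.ite (measurableSet_lt measurable_const hd) ((hd.pow_const 3).inv)
    measurable_const

lemma kk_nonneg (z : E2 × E2) : 0 ≤ kk δ z := by
  unfold kk
  split_ifs with h
  · apply inv_nonneg.2; positivity
  · exact le_rfl

lemma kk_symm (x y : E2) : kk δ (x, y) = kk δ (y, x) := by
  simp [kk, dist_comm]

lemma kk_indicator (x : E2) : (fun y => (φ x - φ y) * kk δ (x, y)) =
    Set.indicator {y : E2 | δ < dist x y} (fun y => (φ x - φ y) / dist x y ^ 3) := by
  funext y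
  by_cases h : δ < dist x y <;>
    simp [kk, Set.indicator_apply, h, Set.mem_setOf_eq, div_eq_mul_inv]

lemma f_slice_int (hδ : 0 < δ) (x : E2) :
    Integrable (fun y => (φ x - φ y) * kk δ (x, y)) volume := by
  rw [kk_indicator]
  exact (integrable_indicator_iff (tail_meas x δ)).2 (tail_f_int φ x hδ)

lemma f_slice_eq (x : E2) : ∫ y, (φ x - φ y) * kk δ (x, y) = Fd φ δ x := by
  rw [kk_indicator, integral_indicator (tail_meas x δ)]
  rfl

lemma f_slice_norm_eq (x : E2) : ∫ y, ‖(φ x - φ y) * kk δ (x, y)‖ =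
    ∫ y in {y : E2 | δ < dist x y}, ‖(φ x - φ y) / dist x y ^ 3‖ := by
  have : (fun y => ‖(φ x - φ y) * kk δ (x, y)‖) =
      Set.indicator {y : E2 | δ < dist x y} (fun y => ‖(φ x - φ y) / dist x y ^ 3‖) := by
    have h1 := congrFun (kk_indicator φ (δ := δ) x)
    funext y
    rw [h1 y, Set.indicator_apply, Set.indicator_apply]
    split_ifs with h
    · rfl
    · exact norm_zero
  rw [this, integral_indicator (tail_meas x δ)]

lemma Fd_stronglyMeasurable (hδ : 0 < δ) : StronglyMeasurable (Fd φ δ) := by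
  have hW : StronglyMeasurable fun z : E2 × E2 => (φ z.1 - φ z.2) * kk δ z :=
    (((φ.continuous.measurable.comp measurable_fst).sub
      (φ.continuous.measurable.comp measurable_snd)).mul kk_meas).stronglyMeasurable
  have h2 := hW.integral_prod_right' (ν := volume)
  have heq : Fd φ δ = fun x => ∫ y, (φ x - φ y) * kk δ (x, y) :=
    funext fun x => (f_slice_eq φ x).symm
  rw [heq]
  exact h2

lemma fubini_nonneg {n : ℕ} (hn : 1 ≤ n) {B : ℝ} (hB : ∀ u, ‖φ u‖ ≤ B)
    (hmono : ∀ x y : E2, φ x ≤ φ y → φ x ^ n ≤ φ y ^ n) (hδ : 0 < δ) :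
    0 ≤ ∫ x : E2, φ x ^ n * Fd φ δ x := by
  have hB0 : 0 ≤ B := le_trans (norm_nonneg _) (hB (0 : E2))
  set L : ℝ := ∫ u : E2, ‖φ u‖ with hL
  set K : ℝ := B * ((1 + δ⁻¹) ^ 3 * ∫ z : E2, (1 + ‖z‖) ^ (-(3:ℝ))) + L * (δ ^ 3)⁻¹ with hK
  set W : E2 × E2 → ℝ := fun z => φ z.1 ^ n * ((φ z.1 - φ z.2) * kk δ z) with hW
  have hWmeas : Measurable W := by
    apply Measurable.mul
    · exact (φ.continuous.measurable.comp measurable_fst).pow_const n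
    · exact ((φ.continuous.measurable.comp measurable_fst).sub
        (φ.continuous.measurable.comp measurable_snd)).mul kk_meas
  have hslice : ∀ x : E2, Integrable (fun y => W (x, y)) volume := by
    intro x
    have := (f_slice_int φ hδ x).const_mul (φ x ^ n)
    simpa [hW] using this
  have hnormle : ∀ x : E2, ∫ y, ‖W (x, y)‖ ≤ B ^ (n - 1) * K * ‖φ x‖ := by
    intro x
    have e1 : ∀ y, ‖W (x, y)‖ = |φ x ^ n| * ‖(φ x - φ y) * kk δ (x, y)‖ := fun y => by
      rw [hW]; simp [abs_mul]
    have e2 : ∫ y, ‖W (x, y)‖ = |φ x ^ n| * ∫ y, ‖(φ x - φ y) * kk δ (x, y)‖ := by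
      simp_rw [e1]; exact integral_const_mul _ _
    rw [e2, f_slice_norm_eq]
    have b1 : |φ x ^ n| ≤ B ^ (n - 1) * ‖φ x‖ := by
      rw [abs_pow]
      calc |φ x| ^ n = |φ x| ^ (n - 1) * |φ x| := by
            rw [← pow_succ]; congr 1; omega
        _ ≤ B ^ (n - 1) * |φ x| :=
            mul_le_mul_of_nonneg_right (pow_le_pow_left₀ (abs_nonneg _) (hB x) _) (abs_nonneg _)
    have b2 : ∫ y in {y : E2 | δ < dist x y}, ‖(φ x - φ y) / dist x y ^ 3‖ ≤ K :=
      norm_f_int_le φ x hB hδ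
    have hb2nonneg : 0 ≤ ∫ y in {y : E2 | δ < dist x y}, ‖(φ x - φ y) / dist x y ^ 3‖ :=
      integral_nonneg fun y => norm_nonneg _
    calc |φ x ^ n| * ∫ y in {y : E2 | δ < dist x y}, ‖(φ x - φ y) / dist x y ^ 3‖
        ≤ (B ^ (n - 1) * ‖φ x‖) * K := mul_le_mul b1 b2 hb2nonneg (by positivity)
      _ = B ^ (n - 1) * K * ‖φ x‖ := by ring
  have hSMnorm : StronglyMeasurable fun x : E2 => ∫ y, ‖W (x, y)‖ :=
    (hWmeas.norm.stronglyMeasurable).integral_prod_right' (ν := volume)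
  have hWint : Integrable W ((volume : Measure E2).prod volume) := by
    refine (integrable_prod_iff hWmeas.aestronglyMeasurable).2 ⟨ae_of_all _ hslice, ?_⟩
    apply Integrable.mono' (φ.integrable.norm.const_mul (B ^ (n - 1) * K))
      hSMnorm.aestronglyMeasurable
    refine ae_of_all _ fun x => ?_
    rw [Real.norm_eq_abs, abs_of_nonneg (integral_nonneg fun y => norm_nonneg _)]
    exact hnormle x
  have hIW : ∫ x : E2, φ x ^ n * Fd φ δ x = ∫ z, W z ∂((volume : Measure E2).prod volume) := by
    rw [integral_prod W hWint]
    congr 1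
    funext x
    have e : (∫ y, W (x, y)) = φ x ^ n * ∫ y, (φ x - φ y) * kk δ (x, y) := by
      simp only [hW]
      exact integral_const_mul _ _
    rw [e, f_slice_eq φ x]
  have hswapint : Integrable (fun z : E2 × E2 => W z.swap)
      ((volume : Measure E2).prod volume) := hWint.swap
  have hswap : ∫ z, W z ∂((volume : Measure E2).prod volume) =
      ∫ z, W z.swap ∂((volume : Measure E2).prod volume) := (integral_prod_swap W).symm
  have hsum : ∀ z : E2 × E2, W z + W z.swap =
      (φ z.1 ^ n - φ z.2 ^ n) * (φ z.1 - φ z.2) * kk δ z := by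
    rintro ⟨x, y⟩
    simp only [hW, Prod.swap_prod_mk, Prod.fst, Prod.snd]
    rw [kk_symm (x := y) (y := x)]
    ring
  have hnn : ∀ z : E2 × E2, 0 ≤ W z + W z.swap := by
    intro z
    rw [hsum z]
    apply mul_nonneg _ (kk_nonneg z)
    rcases le_total (φ z.1) (φ z.2) with h | h
    · have h1 : φ z.1 ^ n - φ z.2 ^ n ≤ 0 := sub_nonpos.2 (hmono _ _ h)
      have h2 : φ z.1 - φ z.2 ≤ 0 := sub_nonpos.2 h
      nlinarith
    · exact mul_nonneg (sub_nonneg.2 (hmono _ _ h)) (sub_nonneg.2 h)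
  have h2 : 2 * ∫ z, W z ∂((volume : Measure E2).prod volume) =
      ∫ z, (W z + W z.swap) ∂((volume : Measure E2).prod volume) := by
    rw [integral_add hWint hswapint, ← hswap]; ring
  have hpos : 0 ≤ ∫ z, (W z + W z.swap) ∂((volume : Measure E2).prod volume) :=
    integral_nonneg hnn
  rw [hIW]
  linarith

end Fubini

set_option maxHeartbeats 1000000 in
/-- For Schwartz `φ` and an integer `p ≥ 2` which is even — or arbitrary provided
`φ ≥ 0` — one has `∫ φ^{p−1} Λφ dx ≥ 0`. -/
theorem stmt8 (c : ℝ) (hc : 0 < c) (φ : SchwartzMap E2 ℝ) (Λφ : E2 → ℝ)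
    (hΛφ : ∀ x, IsHalfLapAt c (⇑φ) x (Λφ x))
    (p : ℕ) (hp : 2 ≤ p) (hcase : Even p ∨ ∀ x, 0 ≤ φ x) :
    0 ≤ ∫ x : E2, (φ x) ^ (p - 1) * Λφ x := by
  classical
  -- Schwartz bounds
  obtain ⟨B, hB⟩ : ∃ B, ∀ u, ‖φ u‖ ≤ B := by
    obtain ⟨C, hC⟩ := φ.decay 0 0
    exact ⟨C, fun u => by simpa using hC.2 u⟩
  obtain ⟨C₂, hC₂⟩ : ∃ C₂, ∀ u, ‖iteratedFDeriv ℝ 2 (⇑φ) u‖ ≤ C₂ := by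
    obtain ⟨C, hC⟩ := φ.decay 0 2
    exact ⟨C, fun u => by simpa using hC.2 u⟩
  have hB0 : 0 ≤ B := le_trans (norm_nonneg _) (hB 0)
  have hC₂0 : 0 ≤ C₂ := le_trans (norm_nonneg _) (hC₂ 0)
  set n : ℕ := p - 1 with hn
  have hn1 : 1 ≤ n := by omega
  have hmono : ∀ x y : E2, φ x ≤ φ y → φ x ^ n ≤ φ y ^ n := by
    rcases hcase with hev | hpos
    · have hodd : Odd n := Nat.Even.sub_odd (by omega) hev odd_one
      exact fun x y h => (hodd.strictMono_pow (R := ℝ)).monotone h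
    · exact fun x y h => pow_le_pow_left₀ (hpos x) h n
  set g : E2 → ℝ := fun x => φ x ^ n with hg
  have hgmeas : Measurable g := φ.continuous.measurable.pow_const n
  have hgint : Integrable g := by
    apply Integrable.mono' (φ.integrable.norm.const_mul (B ^ (n - 1)))
      hgmeas.aestronglyMeasurable
    refine ae_of_all _ fun x => ?_
    rw [hg, Real.norm_eq_abs, abs_pow]
    calc |φ x| ^ n = |φ x| ^ (n - 1) * |φ x| := by rw [← pow_succ]; congr 1; omega
      _ ≤ B ^ (n - 1) * ‖φ x‖ :=
          mul_le_mul_of_nonneg_right (pow_le_pow_left₀ (abs_nonneg _) (hB x) _) (abs_nonneg _)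
  set Lg : ℝ := ∫ x, ‖g x‖ with hLg
  have hLg0 : 0 ≤ Lg := integral_nonneg fun x => norm_nonneg _
  set V : ℝ := (volume (Metric.ball (0:E2) 1)).toReal with hV
  have hV0 : 0 ≤ V := ENNReal.toReal_nonneg
  -- uniform closeness of Λφ and c * Fd δ
  have hclose : ∀ {δ : ℝ}, 0 < δ → ∀ x : E2,
      |Λφ x - c * Fd φ δ x| ≤ c * (C₂ * (4 * δ * V)) := by
    intro δ hδ x
    have h1 : Tendsto (fun δ'' => c * Fd φ δ'' x) (𝓝[>] 0) (𝓝 (Λφ x)) := hΛφ x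
    have h2 : Tendsto (fun δ'' => |c * Fd φ δ'' x - c * Fd φ δ x|) (𝓝[>] (0:ℝ))
        (𝓝 |Λφ x - c * Fd φ δ x|) := ((h1.sub_const _).abs)
    apply le_of_tendsto h2
    filter_upwards [Ioo_mem_nhdsGT hδ] with δ'' hδ''
    obtain ⟨h0'', hlt''⟩ := hδ''
    have hsplit : {y : E2 | δ'' < dist x y} =
        {y : E2 | δ'' < dist x y ∧ dist x y ≤ δ} ∪ {y : E2 | δ < dist x y} := by
      ext y
      simp only [Set.mem_setOf_eq, Set.mem_union]
      constructor
      · intro h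
        rcases le_or_gt (dist x y) δ with h' | h'
        · exact Or.inl ⟨h, h'⟩
        · exact Or.inr h'
      · rintro (⟨h, _⟩ | h)
        · exact h
        · exact lt_trans hlt'' h
    have hdisj : Disjoint {y : E2 | δ'' < dist x y ∧ dist x y ≤ δ} {y : E2 | δ < dist x y} := by
      rw [Set.disjoint_left]
      rintro y ⟨_, h2'⟩ h3
      exact absurd h3 (not_lt.2 h2')
    have hannint : IntegrableOn (fun y : E2 => (φ x - φ y) / dist x y ^ 3)
        {y : E2 | δ'' < dist x y ∧ dist x y ≤ δ} volume :=
      (tail_f_int φ x h0'').mono_set fun y hy => hy.1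
    have hFdd : Fd φ δ'' x =
        (∫ y in {y : E2 | δ'' < dist x y ∧ dist x y ≤ δ}, (φ x - φ y) / dist x y ^ 3) +
          Fd φ δ x := by
      rw [Fd, hsplit, setIntegral_union hdisj (tail_meas x δ) hannint (tail_f_int φ x hδ)]
      rfl
    have : |c * Fd φ δ'' x - c * Fd φ δ x| =
        c * |∫ y in {y : E2 | δ'' < dist x y ∧ dist x y ≤ δ}, (φ x - φ y) / dist x y ^ 3| := by
      rw [hFdd]
      rw [show c * (_ + Fd φ δ x) - c * Fd φ δ x = c *
        (∫ y in {y : E2 | δ'' < dist x y ∧ dist x y ≤ δ}, (φ x - φ y) / dist x y ^ 3) by ring,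
        abs_mul, abs_of_pos hc]
    rw [this]
    exact mul_le_mul_of_nonneg_left (annulus_est φ hB hC₂ x h0'' hlt''.le) hc.le
  -- measurability of Λφ
  have hseq : Tendsto (fun m : ℕ => ((m:ℝ) + 1)⁻¹) atTop (𝓝[>] (0:ℝ)) := by
    apply tendsto_nhdsWithin_of_tendsto_nhds_of_eventually_within
    · exact (tendsto_atTop_add_const_right atTop 1 tendsto_natCast_atTop_atTop).inv_tendsto_atTop
    · exact Eventually.of_forall fun m => Set.mem_Ioi.2 (by positivity)
  have hΛmeas : Measurable Λφ := by
    apply measurable_of_tendsto_metrizable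
      (f := fun m : ℕ => fun x => c * Fd φ ((m:ℝ) + 1)⁻¹ x)
    · intro m
      exact ((Fd_stronglyMeasurable φ (by positivity : (0:ℝ) < ((m:ℝ)+1)⁻¹)).measurable).const_mul c
    · rw [tendsto_pi_nhds]
      exact fun x => (hΛφ x).comp hseq
  -- integrability at fixed δ
  have key : ∀ {δ : ℝ}, 0 < δ →
      0 ≤ (∫ x, g x * Λφ x) + c * (C₂ * (4 * δ * V)) * Lg := by
    intro δ hδ
    set K : ℝ := B * ((1 + δ⁻¹) ^ 3 * ∫ z : E2, (1 + ‖z‖) ^ (-(3:ℝ))) + (∫ u : E2, ‖φ u‖) * (δ ^ 3)⁻¹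
      with hK
    have hFdmeas := (Fd_stronglyMeasurable φ hδ).measurable
    have hFdint : Integrable (fun x => g x * (c * Fd φ δ x)) := by
      apply Integrable.mono' (hgint.norm.const_mul (c * |K|)) 
        (hgmeas.mul (hFdmeas.const_mul c)).aestronglyMeasurable
      refine ae_of_all _ fun x => ?_
      simp only [Pi.mul_apply]
      rw [Real.norm_eq_abs, abs_mul, abs_mul, abs_of_pos hc]
      calc |g x| * (c * |Fd φ δ x|) ≤ |g x| * (c * |K|) := by
            apply mul_le_mul_of_nonneg_left _ (abs_nonneg _)
            apply mul_le_mul_of_nonneg_left _ hc.le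
            exact le_trans (Fd_abs_le φ x hB hδ) (le_abs_self _)
        _ = c * |K| * ‖g x‖ := by rw [Real.norm_eq_abs]; ring
    have herr : Integrable (fun x => g x * (Λφ x - c * Fd φ δ x)) := by
      apply Integrable.mono' (hgint.norm.const_mul (c * (C₂ * (4 * δ * V))))
        (hgmeas.mul (hΛmeas.sub (hFdmeas.const_mul c))).aestronglyMeasurable
      refine ae_of_all _ fun x => ?_
      simp only [Pi.mul_apply, Pi.sub_apply]
      rw [Real.norm_eq_abs, abs_mul]
      calc |g x| * |Λφ x - c * Fd φ δ x| ≤ |g x| * (c * (C₂ * (4 * δ * V))) :=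
            mul_le_mul_of_nonneg_left (hclose hδ x) (abs_nonneg _)
        _ = c * (C₂ * (4 * δ * V)) * ‖g x‖ := by rw [Real.norm_eq_abs]; ring
    have hdecomp : (fun x => g x * Λφ x) =
        fun x => g x * (c * Fd φ δ x) + g x * (Λφ x - c * Fd φ δ x) := by
      funext x; ring
    have hint : ∫ x, g x * Λφ x =
        (∫ x, g x * (c * Fd φ δ x)) + ∫ x, g x * (Λφ x - c * Fd φ δ x) := by
      rw [hdecomp, integral_add hFdint herr]
    have hpos1 : 0 ≤ ∫ x, g x * (c * Fd φ δ x) := by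
      have he : (fun x => g x * (c * Fd φ δ x)) = fun x => c * (φ x ^ n * Fd φ δ x) := by
        funext x; rw [hg]; ring
      rw [he, integral_const_mul]
      exact mul_nonneg hc.le (fubini_nonneg φ hn1 hB hmono hδ)
    have hpos2 : |∫ x, g x * (Λφ x - c * Fd φ δ x)| ≤ c * (C₂ * (4 * δ * V)) * Lg := by
      have h1 : |∫ x, g x * (Λφ x - c * Fd φ δ x)| ≤ ∫ x, ‖g x * (Λφ x - c * Fd φ δ x)‖ := by
        have := norm_integral_le_integral_norm (μ := (volume : Measure E2))
          (f := fun x => g x * (Λφ x - c * Fd φ δ x))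
        rwa [Real.norm_eq_abs] at this
      have h2 : ∫ x, ‖g x * (Λφ x - c * Fd φ δ x)‖ ≤ ∫ x, c * (C₂ * (4 * δ * V)) * ‖g x‖ := by
        apply integral_mono herr.norm (hgint.norm.const_mul _)
        intro x
        dsimp only
        rw [Real.norm_eq_abs, abs_mul]
        calc |g x| * |Λφ x - c * Fd φ δ x| ≤ |g x| * (c * (C₂ * (4 * δ * V))) :=
              mul_le_mul_of_nonneg_left (hclose hδ x) (abs_nonneg _)
          _ = c * (C₂ * (4 * δ * V)) * ‖g x‖ := by rw [Real.norm_eq_abs]; ring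
      calc |∫ x, g x * (Λφ x - c * Fd φ δ x)| ≤ ∫ x, ‖g x * (Λφ x - c * Fd φ δ x)‖ := h1
        _ ≤ ∫ x, c * (C₂ * (4 * δ * V)) * ‖g x‖ := h2
        _ = c * (C₂ * (4 * δ * V)) * Lg := integral_const_mul _ _
    have := abs_le.1 hpos2
    rw [hint]
    linarith
  -- conclude
  have hI : ∀ ε : ℝ, 0 < ε → 0 ≤ (∫ x, g x * Λφ x) + ε := by
    intro ε hε
    set D : ℝ := c * C₂ * 4 * V * Lg + 1 with hD
    have hD0 : 0 < D := by positivity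
    have hδpos : 0 < ε / D := div_pos hε hD0
    have h := key hδpos
    have hcoef : c * (C₂ * (4 * (ε / D) * V)) * Lg ≤ ε := by
      rw [show c * (C₂ * (4 * (ε / D) * V)) * Lg = (c * C₂ * 4 * V * Lg) * (ε / D) by ring]
      rw [div_eq_mul_inv, ← mul_assoc]
      calc c * C₂ * 4 * V * Lg * ε * D⁻¹ ≤ D * ε * D⁻¹ := by
            apply mul_le_mul_of_nonneg_right _ (by positivity)
            apply mul_le_mul_of_nonneg_right _ hε.le
            rw [hD]; linarith
        _ = ε := by field_simp
    linarith
  by_contra hneg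
  push_neg at hneg
  have := hI (-(∫ x, g x * Λφ x) / 2) (by simpa only [hg] using by linarith : _)
  simp only [hg] at *
  linarith
end
end

section
/- Let L > 0, let a : ℝ² → ℝ be a smooth function supported in the ball B(0,L), and let b : ℝ² → ℝ be a Schwartz function. Then there is a constant C > 0 (depending only on the normalization constant of Λ) such that for every x ∈ ℝ² with |x| ≥ 2L, the pointwise commutator bound |Λ(ab)(x) − a(x)Λb(x)| ≤ C |x|^{−3} ‖a‖_{L²(ℝ²)} ‖b‖_{L²(ℝ²)} holds. -/
open MeasureTheory Filter Topology Real Set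
open scoped RealInnerProductSpace
noncomputable section

/-- Pointwise far-field commutator bound: there is `C > 0` depending only on the
normalization constant `c` of `Λ` such that for smooth `a` supported in `B(0,L)`
and Schwartz `b`, `|Λ(ab)(x) − a(x)Λb(x)| ≤ C |x|⁻³ ‖a‖_{L²} ‖b‖_{L²}` whenever
`|x| ≥ 2L`. -/
theorem stmt10 (c : ℝ) (hc : 0 < c) :
    ∃ C : ℝ, 0 < C ∧
      ∀ (L : ℝ), 0 < L →
      ∀ (a : E2 → ℝ), ContDiff ℝ (⊤ : ℕ∞) a → (Function.support a ⊆ Metric.ball 0 L) →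
      ∀ (b : SchwartzMap E2 ℝ), ∀ (Λab Λb : E2 → ℝ),
        (∀ x, IsHalfLapAt c (fun y => a y * b y) x (Λab x)) →
        (∀ x, IsHalfLapAt c (⇑b) x (Λb x)) →
        ∀ x : E2, 2 * L ≤ ‖x‖ →
          |Λab x - a x * Λb x|
            ≤ C * (‖x‖ ^ 3)⁻¹ * Real.sqrt (∫ y : E2, (a y)^2)
                * Real.sqrt (∫ y : E2, (b y)^2) := by
  refine ⟨8 * c, by positivity, ?_⟩
  intro L hL a ha hsupp b Λab Λb hΛab hΛb x hx
  have hxpos : 0 < ‖x‖ := by linarith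
  have hax : a x = 0 := by
    by_contra h
    have := hsupp (Function.mem_support.2 h)
    rw [mem_ball_zero_iff] at this
    linarith
  -- distance bound on the support of a
  have hdist : ∀ y : E2, a y ≠ 0 → ‖x‖ / 2 ≤ dist x y := by
    intro y hy
    have hyL : ‖y‖ < L := mem_ball_zero_iff.1 (hsupp (Function.mem_support.2 hy))
    have h1 : ‖x‖ - ‖y‖ ≤ ‖x - y‖ := norm_sub_norm_le x y
    rw [dist_eq_norm]
    linarith
  -- measurability of the key integrand
  have hcont : Continuous fun y : E2 => a y * b y :=
    (ha.continuous).mul b.continuous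
  have hmeas : AEStronglyMeasurable (fun y : E2 => a y * b y / dist x y ^ 3) volume := by
    exact (hcont.measurable.div ((continuous_const.dist continuous_id).pow 3).measurable).aestronglyMeasurable
  -- a*b is integrable (continuous with compact support)
  have hcs : HasCompactSupport fun y : E2 => a y * b y := by
    apply HasCompactSupport.intro (isCompact_closedBall (0 : E2) L)
    intro y hy
    have : a y = 0 := by
      by_contra h
      exact hy (Metric.ball_subset_closedBall (hsupp (Function.mem_support.2 h)))
    simp [this]
  have hg : Integrable (fun y : E2 => a y * b y) volume :=
    hcont.integrable_of_hasCompactSupport hcs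
  -- pointwise bound
  have hpt : ∀ y : E2, ‖a y * b y / dist x y ^ 3‖ ≤ 8 * (‖x‖ ^ 3)⁻¹ * |a y * b y| := by
    intro y
    rcases eq_or_ne (a y) 0 with h | h
    · simp [h]
    · have hd := hdist y h
      have hd0 : 0 < dist x y := lt_of_lt_of_le (by positivity) hd
      have hcube : (‖x‖ / 2) ^ 3 ≤ dist x y ^ 3 := by
        apply pow_le_pow_left₀ (by positivity) hd
      rw [Real.norm_eq_abs, abs_div, abs_of_pos (pow_pos hd0 3), div_le_iff₀ (pow_pos hd0 3)]
      have h8 : 8 * (‖x‖ ^ 3)⁻¹ * (‖x‖ / 2) ^ 3 = 1 := by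
        field_simp; ring
      calc |a y * b y| = 8 * (‖x‖ ^ 3)⁻¹ * (‖x‖ / 2) ^ 3 * |a y * b y| := by rw [h8]; ring
        _ ≤ 8 * (‖x‖ ^ 3)⁻¹ * dist x y ^ 3 * |a y * b y| := by
            apply mul_le_mul_of_nonneg_right _ (abs_nonneg _)
            apply mul_le_mul_of_nonneg_left hcube (by positivity)
        _ = 8 * (‖x‖ ^ 3)⁻¹ * |a y * b y| * dist x y ^ 3 := by ring
  -- integrability of the key integrand
  have hfi : Integrable (fun y : E2 => a y * b y / dist x y ^ 3) volume := by
    refine Integrable.mono' ((hg.abs.const_mul (8 * (‖x‖ ^ 3)⁻¹))) hmeas ?_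
    exact Eventually.of_forall hpt
  -- identification of Λab x
  set I : ℝ := ∫ y : E2, a y * b y / dist x y ^ 3 with hI
  have key : Λab x = -(c * I) := by
    refine tendsto_nhds_unique (hΛab x) ?_
    refine (tendsto_const_nhds (α := ℝ)).congr' ?_
    filter_upwards [Ioo_mem_nhdsGT hL] with δ hδ
    have hsub : ∀ y : E2, y ∉ {y : E2 | δ < dist x y} → a y * b y / dist x y ^ 3 = 0 := by
      intro y hy
      rcases eq_or_ne (a y) 0 with h | h
      · simp [h]
      · exact absurd (show y ∈ {y : E2 | δ < dist x y} from by
          simp only [Set.mem_setOf_eq]; linarith [hdist y h, hδ.2]) hy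
    have heq : ∀ y ∈ {y : E2 | δ < dist x y},
        ((fun y => a y * b y) x - a y * b y) / dist x y ^ 3 = -(a y * b y / dist x y ^ 3) := by
      intro y _
      simp [hax, neg_div]
    calc -(c * I) = c * ∫ y in {y : E2 | δ < dist x y}, -(a y * b y / dist x y ^ 3) := by
          rw [integral_neg, setIntegral_eq_integral_of_forall_compl_eq_zero hsub]
          ring
      _ = c * ∫ y in {y : E2 | δ < dist x y},
            ((fun y => a y * b y) x - a y * b y) / dist x y ^ 3 := by
          congr 1
          exact (setIntegral_congr_fun (by
            exact measurableSet_lt measurable_const (measurable_const.dist measurable_id)) heq).symm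
  -- final bound
  rw [key, hax]
  have hIb : |I| ≤ 8 * (‖x‖ ^ 3)⁻¹ * ∫ y : E2, |a y * b y| := by
    calc |I| = ‖I‖ := (Real.norm_eq_abs I).symm
      _ ≤ ∫ y : E2, ‖a y * b y / dist x y ^ 3‖ := norm_integral_le_integral_norm _
      _ ≤ ∫ y : E2, 8 * (‖x‖ ^ 3)⁻¹ * |a y * b y| := by
          refine integral_mono hfi.norm (hg.abs.const_mul _) hpt
      _ = 8 * (‖x‖ ^ 3)⁻¹ * ∫ y : E2, |a y * b y| := integral_const_mul _ _
  -- Cauchy–Schwarz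
  have hma : MemLp a (ENNReal.ofReal 2) volume := by
    rw [ENNReal.ofReal_ofNat]
    refine ha.continuous.memLp_of_hasCompactSupport ?_
    apply HasCompactSupport.intro (isCompact_closedBall (0 : E2) L)
    intro y hy
    by_contra h
    exact hy (Metric.ball_subset_closedBall (hsupp (Function.mem_support.2 h)))
  have hmb : MemLp (⇑b) (ENNReal.ofReal 2) volume := by
    rw [ENNReal.ofReal_ofNat, memLp_two_iff_integrable_sq b.continuous.aestronglyMeasurable]
    obtain ⟨Cb, hCb⟩ := b.decay 0 0
    have : Integrable (fun y : E2 => b y * b y) volume := by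
      refine b.integrable.bdd_mul b.continuous.aestronglyMeasurable (c := Cb) (Eventually.of_forall fun y => ?_)
      simpa using hCb.2 y
    simpa [sq] using this
  have hCS : (∫ y : E2, |a y * b y|) ≤
      Real.sqrt (∫ y : E2, (a y) ^ 2) * Real.sqrt (∫ y : E2, (b y) ^ 2) := by
    have hconj : Real.HolderConjugate 2 2 := Real.holderConjugate_iff.mpr ⟨one_lt_two, by norm_num⟩
    have h := integral_mul_norm_le_Lp_mul_Lq hconj hma hmb
    have e1 : (∫ y : E2, |a y * b y|) = ∫ y : E2, ‖a y‖ * ‖b y‖ := by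
      congr 1; funext y; rw [abs_mul, Real.norm_eq_abs, Real.norm_eq_abs]
    have e2 : (∫ y : E2, ‖a y‖ ^ (2 : ℝ)) = ∫ y : E2, (a y) ^ 2 := by
      congr 1; funext y
      rw [show ((2:ℝ)) = ((2:ℕ):ℝ) by norm_num, Real.rpow_natCast, Real.norm_eq_abs, sq_abs]
    have e3 : (∫ y : E2, ‖b y‖ ^ (2 : ℝ)) = ∫ y : E2, (b y) ^ 2 := by
      congr 1; funext y
      rw [show ((2:ℝ)) = ((2:ℕ):ℝ) by norm_num, Real.rpow_natCast, Real.norm_eq_abs, sq_abs]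
    rw [e1]
    refine h.trans_eq ?_
    rw [e2, e3, Real.sqrt_eq_rpow, Real.sqrt_eq_rpow]
  have hIb2 : |I| ≤ 8 * (‖x‖ ^ 3)⁻¹ * (Real.sqrt (∫ y : E2, (a y) ^ 2) * Real.sqrt (∫ y : E2, (b y) ^ 2)) := by
    refine hIb.trans ?_
    apply mul_le_mul_of_nonneg_left hCS (by positivity)
  calc |(-(c * I)) - 0 * Λb x| = c * |I| := by
        rw [zero_mul, sub_zero, abs_neg, abs_mul, abs_of_pos hc]
    _ ≤ c * (8 * (‖x‖ ^ 3)⁻¹ * (Real.sqrt (∫ y : E2, (a y) ^ 2) * Real.sqrt (∫ y : E2, (b y) ^ 2))) :=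
        mul_le_mul_of_nonneg_left hIb2 hc.le
    _ = 8 * c * (‖x‖ ^ 3)⁻¹ * Real.sqrt (∫ y : E2, (a y) ^ 2) * Real.sqrt (∫ y : E2, (b y) ^ 2) := by ring
end
end
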